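/- arXiv:2404.07630 — 15 statements merged into one kernel-verified Lean document; each statement's English description precedes it below -/
import Mathlib

section
/- Let X be a real-valued random variable on a probability space with an atomless distribution and finite mean μ₀ = E[X]. Let W ⊆ ℝ be a Borel set with P(X ∈ W) > 0, let λ ∈ (0,1], and define μ_ND := λ·E[X | X ∈ W] + (1−λ)·μ₀. Then P(X ∈ W and |X − μ₀| > |μ_ND − μ₀|) > 0. (In particular there exists a withheld realization whose disclosure induces strictly larger price volatility than non-disclosure, which is the key step proving that an investor who can trade in both directions always discloses a single verifiable signal.) -/
open MeasureTheory

/-- Single-signal unraveling (key step of Lemma 2): if a positive-probability set `W` of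
realizations is withheld and the non-disclosure price is the convex combination
`μND = λ·E[X | X ∈ W] + (1−λ)·μ₀`, then with positive probability a withheld realization
induces strictly larger price volatility than non-disclosure. -/
theorem stmt_0 {Ω : Type*} [MeasurableSpace Ω] (μ : Measure Ω) [IsProbabilityMeasure μ]
    (X : Ω → ℝ) (hX : Measurable X)
    (hatomless : ∀ c : ℝ, μ {ω | X ω = c} = 0)
    (hint : Integrable X μ)
    (μ₀ : ℝ) (hμ₀ : μ₀ = ∫ ω, X ω ∂μ)
    (W : Set ℝ) (hW : MeasurableSet W)
    (hpos : 0 < μ (X ⁻¹' W))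
    (lam : ℝ) (hlam : lam ∈ Set.Ioc (0 : ℝ) 1)
    (μND : ℝ)
    (hμND : μND = lam * ((∫ ω in X ⁻¹' W, X ω ∂μ) / (μ (X ⁻¹' W)).toReal)
      + (1 - lam) * μ₀) :
    0 < μ {ω | X ω ∈ W ∧ |μND - μ₀| < |X ω - μ₀|} := by
  obtain ⟨hlam0, hlam1⟩ := hlam
  set S := X ⁻¹' W with hS
  have hSm : MeasurableSet S := hX hW
  have hp : 0 < (μ S).toReal := ENNReal.toReal_pos hpos.ne' (measure_ne_top μ S)
  set p := (μ S).toReal with hpdef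
  set m := (∫ ω in S, X ω ∂μ) / p with hm
  set r := |μND - μ₀| with hr
  have hrd : r = lam * |m - μ₀| := by
    have : μND - μ₀ = lam * (m - μ₀) := by rw [hμND]; ring
    rw [hr, this, abs_mul, abs_of_pos hlam0]
  by_contra h
  have hA0 : μ {ω | X ω ∈ W ∧ r < |X ω - μ₀|} = 0 :=
    le_antisymm (not_lt.mp h) zero_le
  have hae : ∀ᵐ ω ∂μ, ω ∈ S → |X ω - μ₀| ≤ r := by
    rw [ae_iff]
    convert hA0 using 2
    ext ω
    simp [hS, Set.mem_preimage, not_le]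
  have haeR : ∀ᵐ ω ∂μ.restrict S, |X ω - μ₀| ≤ r := (ae_restrict_iff' hSm).2 hae
  have hint1 : IntegrableOn (fun ω => |X ω - μ₀|) S μ :=
    ((hint.sub (integrable_const μ₀)).abs).integrableOn
  have hint2 : IntegrableOn (fun ω => X ω - μ₀) S μ :=
    (hint.sub (integrable_const μ₀)).integrableOn
  have h1 : |∫ ω in S, (X ω - μ₀) ∂μ| ≤ ∫ ω in S, |X ω - μ₀| ∂μ :=
    by
    simpa [Real.norm_eq_abs] using
      norm_integral_le_integral_norm (μ := μ.restrict S) (fun ω => X ω - μ₀)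
  have h2 : ∫ ω in S, |X ω - μ₀| ∂μ ≤ r * p := by
    have := integral_mono_ae hint1 (integrable_const r) haeR
    simpa [integral_const, measureReal_restrict_apply_univ, measureReal_def, smul_eq_mul, mul_comm] using this
  have h3 : ∫ ω in S, (X ω - μ₀) ∂μ = (m - μ₀) * p := by
    rw [integral_sub hint.integrableOn (integrable_const μ₀), integral_const,
      measureReal_restrict_apply_univ, measureReal_def]
    simp only [smul_eq_mul, ← hpdef]
    rw [hm]
    field_simp
  have h4 : |m - μ₀| * p ≤ r * p := by
    calc |m - μ₀| * p = |(m - μ₀) * p| := by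
          rw [abs_mul, abs_of_pos hp]
      _ = |∫ ω in S, (X ω - μ₀) ∂μ| := by rw [h3]
      _ ≤ ∫ ω in S, |X ω - μ₀| ∂μ := h1
      _ ≤ r * p := h2
  have h5 : |m - μ₀| ≤ r := le_of_mul_le_mul_right h4 hp
  have h6 : r ≤ |m - μ₀| := by
    rw [hrd]
    nlinarith [abs_nonneg (m - μ₀)]
  have hre : r = |m - μ₀| := le_antisymm h6 h5
  -- the integral of |X - μ₀| over S equals r * p
  have h7 : ∫ ω in S, |X ω - μ₀| ∂μ = r * p := by
    have hlow : r * p ≤ ∫ ω in S, |X ω - μ₀| ∂μ := by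
      calc r * p = |m - μ₀| * p := by rw [hre]
        _ = |∫ ω in S, (X ω - μ₀) ∂μ| := by rw [h3, abs_mul, abs_of_pos hp]
        _ ≤ ∫ ω in S, |X ω - μ₀| ∂μ := h1
    linarith
  -- hence |X - μ₀| = r a.e. on S
  have h8 : ∫ ω in S, (r - |X ω - μ₀|) ∂μ = 0 := by
    rw [integral_sub (integrable_const r) hint1, integral_const,
      measureReal_restrict_apply_univ, measureReal_def]
    simp only [smul_eq_mul, ← hpdef]
    rw [h7]; ring
  have h9 : (fun ω => r - |X ω - μ₀|) =ᵐ[μ.restrict S] 0 := by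
    have hnn : 0 ≤ᵐ[μ.restrict S] fun ω => r - |X ω - μ₀| :=
      haeR.mono fun ω hω => by simpa using hω
    exact (setIntegral_eq_zero_iff_of_nonneg_ae hnn
      ((integrable_const r).sub hint1.integrable)).mp h8
  have h10 : ∀ᵐ ω ∂μ.restrict S, X ω = μ₀ + r ∨ X ω = μ₀ - r := by
    refine h9.mono fun ω hω => ?_
    have : |X ω - μ₀| = r := by
      have := hω; simp only [Pi.zero_apply] at this; linarith
    rcases abs_eq (by rw [← this]; exact abs_nonneg _) |>.mp this with h' | h'
    · left; linarith
    · right; linarith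
  set B : Set Ω := {ω | X ω = μ₀ + r} ∪ {ω | X ω = μ₀ - r} with hB
  have hBmeas0 : μ B = 0 := by
    refine le_antisymm ?_ zero_le
    calc μ B ≤ μ {ω | X ω = μ₀ + r} + μ {ω | X ω = μ₀ - r} := measure_union_le _ _
      _ = 0 := by rw [hatomless, hatomless, add_zero]
  have hSB : μ.restrict S Bᶜ = 0 := by
    have : ∀ᵐ ω ∂μ.restrict S, ω ∈ B := h10.mono fun ω hω => by
      rcases hω with h' | h'
      · exact Or.inl h'
      · exact Or.inr h'
    exact ae_iff.mp this
  have hfin : μ S = 0 := by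
    have h11 : μ.restrict S Set.univ ≤ μ.restrict S B + μ.restrict S Bᶜ := by
      rw [← Set.union_compl_self B]
      exact measure_union_le _ _
    have hrB : μ.restrict S B ≤ μ B := Measure.restrict_apply_le _ _
    refine le_antisymm ?_ zero_le
    calc μ S = μ.restrict S Set.univ := (Measure.restrict_apply_univ _).symm
      _ ≤ μ.restrict S B + μ.restrict S Bᶜ := h11
      _ ≤ μ B + 0 := by gcongr <;> simp [hrB, hSB]
      _ = 0 := by rw [hBmeas0, add_zero]
  exact absurd hpos (by simp [hfin])
end

section
/- Let b, c be real numbers with b < c and let q ∈ (0,1). For every real t: |q·t + (1−q)·b − c| ≥ |t − c| if and only if b ≤ t ≤ (2c − (1−q)·b)/(1+q). -/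
/-- Withholding characterization when `b < c` (case `r < r₀`): the price volatility from
withholding, `|q·t + (1−q)·b − c|`, exceeds that from disclosing, `|t − c|`, exactly when
`t` lies in the interval `[b, (2c − (1−q)b)/(1+q)]`. -/
theorem stmt_1 (b c q : ℝ) (hbc : b < c) (hq : q ∈ Set.Ioo (0 : ℝ) 1) (t : ℝ) :
    |q * t + (1 - q) * b - c| ≥ |t - c| ↔
      b ≤ t ∧ t ≤ (2 * c - (1 - q) * b) / (1 + q) := by
  obtain ⟨hq0, hq1⟩ := hq
  have h1q : (0:ℝ) < 1 + q := by linarith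
  have key : |q * t + (1 - q) * b - c| ≥ |t - c| ↔
      (t - c)^2 ≤ (q * t + (1 - q) * b - c)^2 := by
    rw [ge_iff_le, ← sq_abs (t - c), ← sq_abs (q * t + (1 - q) * b - c)]
    exact (pow_le_pow_iff_left₀ (abs_nonneg _) (abs_nonneg _) two_ne_zero).symm
  rw [key, le_div_iff₀ h1q]
  constructor
  · intro h
    constructor
    · by_contra hb
      push_neg at hb
      nlinarith [mul_pos (show (0:ℝ) < b - t by linarith)
        (show (0:ℝ) < 2*c - (1-q)*b - (1+q)*t by nlinarith)]
    · by_contra hb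
      push_neg at hb
      nlinarith [mul_pos (show (0:ℝ) < t - b by nlinarith)
        (show (0:ℝ) < (1+q)*t - (2*c - (1-q)*b) by nlinarith)]
  · rintro ⟨h1, h2⟩
    nlinarith [mul_nonneg (show (0:ℝ) ≤ t - b by linarith)
      (show (0:ℝ) ≤ 2*c - (1-q)*b - (1+q)*t by nlinarith)]
end

section
/- Let g : ℝ → ℝ be a continuous, everywhere positive probability density with CDF G(x) = ∫_{−∞}^{x} g(t) dt, ∫_ℝ g = 1, and mean μ₀ = ∫_ℝ x·g(x) dx. Let β ∈ (0,1), q ∈ (0,1), and s ∈ ℝ. Define x̄(u) = 2s/(1+q) − ((1−q)/(1+q))·u and Q(u) = β·∫_{u}^{x̄(u)} (G(x) − G(x̄(u))) dx − (1−β)·(μ₀ − u). Then Q is strictly increasing on (−∞, s]. -/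
open MeasureTheory Set

/-- The equilibrium-determining function `Q` for the case `r < r₀` (with `s = r₀μ₀/r`) is
strictly increasing on `(−∞, s]`. -/
theorem stmt_6 (g : ℝ → ℝ) (hg_cont : Continuous g) (hg_pos : ∀ x, 0 < g x)
    (hg_one : (∫ x, g x) = 1)
    (hxg_int : Integrable (fun x => x * g x))
    (μ₀ : ℝ) (hμ₀ : μ₀ = ∫ x, x * g x)
    (G : ℝ → ℝ) (hG : ∀ x, G x = ∫ t in Iic x, g t)
    (β : ℝ) (hβ : β ∈ Set.Ioo (0 : ℝ) 1)
    (q : ℝ) (hq : q ∈ Set.Ioo (0 : ℝ) 1)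
    (s : ℝ)
    (xbar : ℝ → ℝ) (hxbar : ∀ u, xbar u = 2 * s / (1 + q) - ((1 - q) / (1 + q)) * u)
    (Q : ℝ → ℝ)
    (hQ : ∀ u, Q u = β * (∫ x in u..(xbar u), (G x - G (xbar u))) - (1 - β) * (μ₀ - u)) :
    StrictMonoOn Q (Set.Iic s) := by
  obtain ⟨hβ0, hβ1⟩ := hβ
  obtain ⟨hq0, hq1⟩ := hq
  have hq1' : (0:ℝ) < 1 + q := by linarith
  -- g is integrable
  have hg_int : Integrable g := by
    by_contra h
    rw [integral_undef h] at hg_one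
    norm_num at hg_one
  -- G b - G a = ∫ a..b g
  have hGab : ∀ a b : ℝ, G b - G a = ∫ x in a..b, g x := by
    intro a b
    rw [hG, hG]
    exact intervalIntegral.integral_Iic_sub_Iic hg_int.integrableOn hg_int.integrableOn
  -- G has derivative g
  have hG_deriv : ∀ x, HasDerivAt G (g x) x := by
    intro x
    have h0 : ∀ y, G y = G 0 + ∫ t in (0:ℝ)..y, g t := by
      intro y; have := hGab 0 y; linarith
    have hd : HasDerivAt (fun y => G 0 + ∫ t in (0:ℝ)..y, g t) (g x) x := by
      refine (intervalIntegral.integral_hasDerivAt_right (hg_cont.intervalIntegrable 0 x)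
        (hg_cont.stronglyMeasurableAtFilter _ _) hg_cont.continuousAt).const_add (G 0)
    exact hd.congr_of_eventuallyEq (Filter.Eventually.of_forall fun y => (h0 y))
  have hG_cont : Continuous G :=
    continuous_iff_continuousAt.mpr fun x => (hG_deriv x).continuousAt
  have hG_mono : ∀ a b : ℝ, a ≤ b → G a ≤ G b := by
    intro a b hab
    have h := hGab a b
    have : 0 ≤ ∫ x in a..b, g x :=
      intervalIntegral.integral_nonneg hab fun x _ => (hg_pos x).le
    linarith
  -- antiderivative of G
  set Φ : ℝ → ℝ := fun y => ∫ t in (0:ℝ)..y, G t with hΦ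
  have hΦ_deriv : ∀ y, HasDerivAt Φ (G y) y := by
    intro y
    exact intervalIntegral.integral_hasDerivAt_right (hG_cont.intervalIntegrable 0 y)
      (hG_cont.stronglyMeasurableAtFilter _ _) hG_cont.continuousAt
  -- rewrite Q
  have hQ' : ∀ u, Q u = β * (Φ (xbar u) - Φ u - G (xbar u) * (xbar u - u)) - (1 - β) * (μ₀ - u) := by
    intro u
    rw [hQ]
    have h1 : (∫ x in u..(xbar u), (G x - G (xbar u)))
        = (∫ x in u..(xbar u), G x) - (xbar u - u) * G (xbar u) := by
      rw [intervalIntegral.integral_sub (hG_cont.intervalIntegrable _ _)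
        (intervalIntegrable_const (μ := volume)), intervalIntegral.integral_const]
      simp [smul_eq_mul]
    have h2 : (∫ x in u..(xbar u), G x) = Φ (xbar u) - Φ u := by
      have := intervalIntegral.integral_add_adjacent_intervals
        (hG_cont.intervalIntegrable 0 u : IntervalIntegrable G volume 0 u)
        (hG_cont.intervalIntegrable u (xbar u) : IntervalIntegrable G volume u (xbar u))
      simp only [hΦ]
      linarith
    rw [h1, h2]; ring
  -- derivative of xbar
  set c : ℝ := -((1 - q) / (1 + q)) with hc
  have hxbar_deriv : ∀ u, HasDerivAt xbar c u := by
    intro u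
    have hd : HasDerivAt (fun u : ℝ => 2 * s / (1 + q) - ((1 - q) / (1 + q)) * u) c u := by
      simpa [hc] using (((hasDerivAt_id u).const_mul ((1 - q) / (1 + q))).const_sub
        (2 * s / (1 + q)))
    exact hd.congr_of_eventuallyEq (Filter.Eventually.of_forall fun y => (hxbar y))
  -- derivative of Q
  have hQ_deriv : ∀ u, HasDerivAt Q
      (β * ((G (xbar u) - G u) - g (xbar u) * c * (xbar u - u)) + (1 - β)) u := by
    intro u
    have h1 : HasDerivAt (fun u => Φ (xbar u)) (G (xbar u) * c) u :=
      (hΦ_deriv (xbar u)).comp u (hxbar_deriv u)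
    have h2 : HasDerivAt Φ (G u) u := hΦ_deriv u
    have h3 : HasDerivAt (fun u => G (xbar u)) (g (xbar u) * c) u :=
      (hG_deriv (xbar u)).comp u (hxbar_deriv u)
    have h4 : HasDerivAt (fun u => xbar u - u) (c - 1) u :=
      (hxbar_deriv u).sub (hasDerivAt_id u)
    have h5 : HasDerivAt (fun u => G (xbar u) * (xbar u - u))
        (g (xbar u) * c * (xbar u - u) + G (xbar u) * (c - 1)) u := h3.mul h4
    have h6 : HasDerivAt (fun u => μ₀ - u) (-1 : ℝ) u := by
      simpa using (hasDerivAt_id u).const_sub μ₀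
    have h7 : HasDerivAt (fun u => β * (Φ (xbar u) - Φ u - G (xbar u) * (xbar u - u))
        - (1 - β) * (μ₀ - u))
        (β * ((G (xbar u) * c - G u) - (g (xbar u) * c * (xbar u - u) + G (xbar u) * (c - 1)))
          - (1 - β) * (-1)) u :=
      (((h1.sub h2).sub h5).const_mul β).sub (h6.const_mul (1 - β))
    have heq : (β * ((G (xbar u) * c - G u) - (g (xbar u) * c * (xbar u - u)
        + G (xbar u) * (c - 1))) - (1 - β) * (-1))
        = β * ((G (xbar u) - G u) - g (xbar u) * c * (xbar u - u)) + (1 - β) := by ring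
    rw [heq] at h7
    exact h7.congr_of_eventuallyEq (Filter.Eventually.of_forall fun y => (hQ' y))
  -- conclude
  have hconv : Convex ℝ (Set.Iic s) := convex_Iic s
  refine strictMonoOn_of_deriv_pos hconv ?_ ?_
  · exact fun u _ => ((hQ_deriv u).continuousAt).continuousWithinAt
  · intro u hu
    rw [interior_Iic] at hu
    rw [(hQ_deriv u).deriv]
    have hus : u < s := hu
    have hxu : 0 < xbar u - u := by
      have h : xbar u - u = 2 * (s - u) / (1 + q) := by
        rw [hxbar]; field_simp; ring
      rw [h]
      exact div_pos (by linarith) hq1'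
    have hA : 0 ≤ G (xbar u) - G u := by
      have := hG_mono u (xbar u) (by linarith)
      linarith
    have hcneg : c < 0 := by
      rw [hc]
      have : 0 < (1 - q) / (1 + q) := div_pos (by linarith) hq1'
      linarith
    have hB : 0 < g (xbar u) * (-c) * (xbar u - u) :=
      mul_pos (mul_pos (hg_pos _) (neg_pos.mpr hcneg)) hxu
    nlinarith [mul_nonneg hβ0.le hA, mul_pos hβ0 hB]
end

section
/- Let g : ℝ → ℝ be a continuous, everywhere positive probability density with CDF G(x) = ∫_{−∞}^{x} g(t) dt, ∫_ℝ g = 1, mean μ₀ = ∫_ℝ x·g(x) dx, and μ₀ > 0. Let β ∈ (0,1), q ∈ (0,1), and let 0 < r < r₀, so that s := r₀μ₀/r > μ₀. Define x̄(u) = 2s/(1+q) − ((1−q)/(1+q))·u and Q(u) = β·∫_{u}^{x̄(u)} (G(x) − G(x̄(u))) dx − (1−β)·(μ₀ − u). Then Q has exactly one zero x̲ in (−∞, s], this zero satisfies μ₀ < x̲ < s, and the corresponding upper threshold x̄ := x̄(x̲) satisfies x̄ > s. In particular x̲ < s < x̄. -/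
open MeasureTheory Set

/-- Existence and uniqueness of the equilibrium thresholds when `r < r₀` (Proposition 2):
`Q` has a unique zero `x̲` in `(−∞, s]`, it satisfies `μ₀ < x̲ < s`, and the corresponding
upper threshold `x̄ = x̄(x̲)` satisfies `x̄ > s`; so the withholding interval straddles
`s = r₀μ₀/r` (Corollary 1). -/
theorem stmt_7 (g : ℝ → ℝ) (hg_cont : Continuous g) (hg_pos : ∀ x, 0 < g x)
    (hg_one : (∫ x, g x) = 1)
    (hxg_int : Integrable (fun x => x * g x))
    (μ₀ : ℝ) (hμ₀ : μ₀ = ∫ x, x * g x) (hμ₀pos : 0 < μ₀)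
    (G : ℝ → ℝ) (hG : ∀ x, G x = ∫ t in Iic x, g t)
    (β : ℝ) (hβ : β ∈ Set.Ioo (0 : ℝ) 1)
    (q : ℝ) (hq : q ∈ Set.Ioo (0 : ℝ) 1)
    (r r₀ : ℝ) (hr : 0 < r) (hrr₀ : r < r₀)
    (s : ℝ) (hs : s = r₀ * μ₀ / r)
    (xbar : ℝ → ℝ) (hxbar : ∀ u, xbar u = 2 * s / (1 + q) - ((1 - q) / (1 + q)) * u)
    (Q : ℝ → ℝ)
    (hQ : ∀ u, Q u = β * (∫ x in u..(xbar u), (G x - G (xbar u))) - (1 - β) * (μ₀ - u)) :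
    ∃ xl, (xl ∈ Set.Iic s ∧ Q xl = 0) ∧
      (∀ y ∈ Set.Iic s, Q y = 0 → y = xl) ∧
      μ₀ < xl ∧ xl < s ∧ s < xbar xl := by
  obtain ⟨hβ0, hβ1⟩ := hβ
  obtain ⟨hq0, hq1⟩ := hq
  have h1q : (0:ℝ) < 1 + q := by linarith
  set k : ℝ := (1 - q) / (1 + q) with hk
  have hk0 : 0 < k := div_pos (by linarith) h1q
  have hk1 : k < 1 := (div_lt_one h1q).2 (by linarith)
  -- s > μ₀
  have hsμ : μ₀ < s := by
    rw [hs, lt_div_iff₀ hr]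
    nlinarith
  -- g is integrable
  have hgint : Integrable g := by
    by_contra h
    rw [integral_undef h] at hg_one
    norm_num at hg_one
  -- G as an interval integral from 0
  have hGrep : ∀ x, G x = G 0 + ∫ t in (0:ℝ)..x, g t := by
    intro x
    have := intervalIntegral.integral_Iic_sub_Iic hgint.integrableOn hgint.integrableOn
      (a := 0) (b := x) (f := g) (μ := volume)
    rw [hG x, hG 0]
    linarith [this]
  -- derivative of G
  have hGder : ∀ x, HasDerivAt G (g x) x := by
    intro x
    have h : HasDerivAt (fun y => G 0 + ∫ t in (0:ℝ)..y, g t) (g x) x :=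
      (intervalIntegral.integral_hasDerivAt_right (hg_cont.intervalIntegrable 0 x)
        hg_cont.aestronglyMeasurable.stronglyMeasurableAtFilter
        hg_cont.continuousAt).const_add (G 0)
    have : G = fun y => G 0 + ∫ t in (0:ℝ)..y, g t := funext hGrep
    rw [this]
    exact h
  have hGcont : Continuous G := by
    rw [continuous_iff_continuousAt]
    exact fun x => (hGder x).continuousAt
  -- G strictly monotone
  have hGmono : StrictMono G := by
    intro a b hab
    have hpos : 0 < ∫ t in a..b, g t :=
      intervalIntegral.intervalIntegral_pos_of_pos (hg_cont.intervalIntegrable a b) hg_pos hab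
    have := intervalIntegral.integral_Iic_sub_Iic hgint.integrableOn hgint.integrableOn
      (a := a) (b := b) (f := g) (μ := volume)
    rw [hG a, hG b]
    linarith [this]
  -- antiderivative of G
  set H : ℝ → ℝ := fun u => ∫ t in (0:ℝ)..u, G t with hH
  have hHder : ∀ u, HasDerivAt H (G u) u := fun u =>
    intervalIntegral.integral_hasDerivAt_right (hGcont.intervalIntegrable 0 u)
      hGcont.aestronglyMeasurable.stronglyMeasurableAtFilter
      hGcont.continuousAt
  have hsplit : ∀ u v : ℝ, (∫ x in u..v, G x) = H v - H u := by
    intro u v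
    have h : (∫ x in (0:ℝ)..u, G x) + (∫ x in u..v, G x) = ∫ x in (0:ℝ)..v, G x :=
      intervalIntegral.integral_add_adjacent_intervals
      (hGcont.intervalIntegrable 0 u) (hGcont.intervalIntegrable u v)
    simp only [hH]
    linarith
  -- rewrite xbar explicitly
  have hxbarfun : xbar = fun u => 2 * s / (1 + q) - k * u := funext hxbar
  subst hxbarfun
  -- rewrite Q explicitly
  have hQeq : ∀ u, Q u = β * (H (2 * s / (1 + q) - k * u) - H u
      - (2 * s / (1 + q) - k * u - u) * G (2 * s / (1 + q) - k * u)) - (1 - β) * (μ₀ - u) := by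
    intro u
    rw [hQ u]
    congr 1
    congr 1
    rw [intervalIntegral.integral_sub (hGcont.intervalIntegrable _ _)
      (intervalIntegrable_const), hsplit, intervalIntegral.integral_const]
    simp

  have hQfun : Q = fun u => β * (H (2 * s / (1 + q) - k * u) - H u
      - (2 * s / (1 + q) - k * u - u) * G (2 * s / (1 + q) - k * u)) - (1 - β) * (μ₀ - u) :=
    funext hQeq
  subst hQfun
  set b : ℝ → ℝ := fun u => 2 * s / (1 + q) - k * u with hb
  -- basic facts about b
  have hbdiff : ∀ u, b u - u = 2 * (s - u) / (1 + q) := by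
    intro u
    rw [hb, hk]
    field_simp
    ring
  have hbs : b s = s := by
    rw [hb, hk]
    field_simp
    ring
  have hbgt : ∀ u, u < s → u < b u := by
    intro u hu
    have h2 : 0 < 2 * (s - u) / (1 + q) := div_pos (by linarith) h1q
    have h3 : 0 < b u - u := by rw [hbdiff u]; exact h2
    exact sub_pos.mp h3
  -- derivative of Q
  have hbder : ∀ u, HasDerivAt b (-k) u := by
    intro u
    have : HasDerivAt (fun u : ℝ => k * u) k u := by
      simpa using (hasDerivAt_id u).const_mul k
    simpa using this.const_sub (2 * s / (1 + q))
  have hQder : ∀ u, HasDerivAt (fun u => β * (H (b u) - H u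
      - (b u - u) * G (b u)) - (1 - β) * (μ₀ - u))
      (β * ((G (b u) - G u) + k * (b u - u) * g (b u)) + (1 - β)) u := by
    intro u
    have h1 : HasDerivAt (fun u => H (b u)) (G (b u) * (-k)) u :=
      (hHder (b u)).comp u (hbder u)
    have h2 : HasDerivAt (fun u => b u - u) (-k - 1) u :=
      (hbder u).sub (hasDerivAt_id u)
    have h3 : HasDerivAt (fun u => G (b u)) (g (b u) * (-k)) u :=
      (hGder (b u)).comp u (hbder u)
    have h4 : HasDerivAt (fun u => (b u - u) * G (b u))
        ((-k - 1) * G (b u) + (b u - u) * (g (b u) * (-k))) u := h2.mul h3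
    have h5 : HasDerivAt (fun u : ℝ => (1 - β) * (μ₀ - u)) ((1 - β) * (-1)) u :=
      ((hasDerivAt_id u).const_sub μ₀).const_mul (1 - β)
    have h6 := (((h1.sub (hHder u)).sub h4).const_mul β).sub h5
    exact h6.congr_deriv (by ring)
  have hQcont : Continuous (fun u => β * (H (b u) - H u
      - (b u - u) * G (b u)) - (1 - β) * (μ₀ - u)) := by
    rw [continuous_iff_continuousAt]
    exact fun u => (hQder u).continuousAt
  -- strict monotonicity on Iic s
  have hQmono : StrictMonoOn (fun u => β * (H (b u) - H u
      - (b u - u) * G (b u)) - (1 - β) * (μ₀ - u)) (Iic s) := by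
    apply strictMonoOn_of_deriv_pos (convex_Iic s) hQcont.continuousOn
    intro x hx
    rw [interior_Iic] at hx
    rw [(hQder x).deriv]
    have hxb : x < b x := hbgt x hx
    have h1 : G x ≤ G (b x) := (hGmono hxb).le
    have h2 : 0 < g (b x) := hg_pos (b x)
    have h3 : 0 < k * (b x - x) * g (b x) :=
      mul_pos (mul_pos hk0 (by linarith)) h2
    have h4 : 0 < (G (b x) - G x) + k * (b x - x) * g (b x) := by linarith
    have := mul_pos hβ0 h4
    linarith
  -- value at μ₀ is negative
  have hQμ₀ : (fun u => β * (H (b u) - H u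
      - (b u - u) * G (b u)) - (1 - β) * (μ₀ - u)) μ₀ < 0 := by
    simp only
    have hμb : μ₀ < b μ₀ := hbgt μ₀ hsμ
    have hpos : 0 < ∫ x in μ₀..(b μ₀), (G (b μ₀) - G x) := by
      apply intervalIntegral.intervalIntegral_pos_of_pos_on
        ((continuous_const.sub hGcont).intervalIntegrable _ _)
        (fun x hx => sub_pos.2 (hGmono hx.2)) hμb
    rw [intervalIntegral.integral_sub intervalIntegrable_const
      (hGcont.intervalIntegrable _ _), hsplit, intervalIntegral.integral_const] at hpos
    simp only [smul_eq_mul] at hpos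
    nlinarith
  -- value at s is positive
  have hQs : 0 < (fun u => β * (H (b u) - H u
      - (b u - u) * G (b u)) - (1 - β) * (μ₀ - u)) s := by
    simp only [hbs]
    nlinarith
  -- existence via IVT
  have hivt := intermediate_value_Ioo (le_of_lt hsμ) hQcont.continuousOn
  have h0mem : (0:ℝ) ∈ Ioo ((fun u => β * (H (b u) - H u
      - (b u - u) * G (b u)) - (1 - β) * (μ₀ - u)) μ₀) ((fun u => β * (H (b u) - H u
      - (b u - u) * G (b u)) - (1 - β) * (μ₀ - u)) s) := ⟨hQμ₀, hQs⟩
  obtain ⟨xl, hxl, hxl0⟩ := hivt h0mem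
  refine ⟨xl, ⟨le_of_lt hxl.2, hxl0⟩, ?_, hxl.1, hxl.2, ?_⟩
  · intro y hy hy0
    exact hQmono.injOn hy (le_of_lt hxl.2) (hy0.trans hxl0.symm)
  · show s < b xl
    have : b xl - s = k * (s - xl) := by
      rw [hb, hk]
      field_simp
      ring
    nlinarith [hxl.2]
end

section
/- Let g : ℝ → ℝ be a continuous, everywhere positive probability density with CDF G(x) = ∫_{−∞}^{x} g(t) dt, ∫_ℝ g = 1, and mean μ₀ = ∫_ℝ x·g(x) dx. Let β ∈ (0,1), q ∈ (0,1), and s ∈ ℝ. Define x̲(v) = 2s/(1+q) − ((1−q)/(1+q))·v and R(v) = β·∫_{x̲(v)}^{v} (G(x) − G(x̲(v))) dx − (1−β)·(μ₀ − v). Then R is strictly increasing on [s, +∞). -/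
open MeasureTheory Set

/-- The equilibrium-determining function `R` for the case `r > r₀` (with `s = r₀μ₀/r`) is
strictly increasing on `[s, +∞)`. -/
theorem stmt_8 (g : ℝ → ℝ) (hg_cont : Continuous g) (hg_pos : ∀ x, 0 < g x)
    (hg_one : (∫ x, g x) = 1)
    (hxg_int : Integrable (fun x => x * g x))
    (μ₀ : ℝ) (hμ₀ : μ₀ = ∫ x, x * g x)
    (G : ℝ → ℝ) (hG : ∀ x, G x = ∫ t in Iic x, g t)
    (β : ℝ) (hβ : β ∈ Set.Ioo (0 : ℝ) 1)
    (q : ℝ) (hq : q ∈ Set.Ioo (0 : ℝ) 1)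
    (s : ℝ)
    (xlow : ℝ → ℝ) (hxlow : ∀ v, xlow v = 2 * s / (1 + q) - ((1 - q) / (1 + q)) * v)
    (R : ℝ → ℝ)
    (hR : ∀ v, R v = β * (∫ x in (xlow v)..v, (G x - G (xlow v))) - (1 - β) * (μ₀ - v)) :
    StrictMonoOn R (Set.Ici s) := by
  obtain ⟨hβ0, hβ1⟩ := hβ
  obtain ⟨hq0, hq1⟩ := hq
  have h1q : (0:ℝ) < 1 + q := by linarith
  -- g is integrable
  have hg_int : Integrable g := by
    by_contra h
    rw [integral_undef h] at hg_one
    norm_num at hg_one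
  -- G is monotone
  have hG_mono : Monotone G := by
    intro a b hab
    rw [hG a, hG b]
    apply setIntegral_mono_set hg_int.integrableOn
    · exact Filter.Eventually.of_forall fun x => (hg_pos x).le
    · exact HasSubset.Subset.eventuallyLE (Iic_subset_Iic.mpr hab)
  -- interval integrability of G minus a constant
  have hii : ∀ (c a b : ℝ), IntervalIntegrable (fun x => G x - G c) volume a b := by
    intro c a b
    have hm : Monotone (fun x => G x - G c) := fun x y hxy =>
      sub_le_sub_right (hG_mono hxy) _
    exact (hm.monotoneOn _).intervalIntegrable
  -- xlow is at most v for v ≥ s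
  have hxlow_le : ∀ v, s ≤ v → xlow v ≤ v := by
    intro v hv
    rw [hxlow, div_mul_eq_mul_div, ← sub_div, div_le_iff₀ h1q]
    nlinarith
  -- xlow is antitone
  have hxlow_anti : ∀ v w, v ≤ w → xlow w ≤ xlow v := by
    intro v w hvw
    rw [hxlow, hxlow]
    apply sub_le_sub_left
    exact mul_le_mul_of_nonneg_left hvw (div_nonneg (by linarith) h1q.le)
  intro v₁ hv₁ v₂ hv₂ h12
  rw [hR v₁, hR v₂]
  set a₁ := xlow v₁ with ha₁
  set a₂ := xlow v₂ with ha₂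
  have h21 : a₂ ≤ a₁ := hxlow_anti v₁ v₂ h12.le
  have h1v1 : a₁ ≤ v₁ := hxlow_le v₁ hv₁
  have hGa : G a₂ ≤ G a₁ := hG_mono h21
  -- Step 1: replace G a₁ by G a₂ in the inner integral
  have step1 : (∫ x in a₁..v₁, (G x - G a₁)) ≤ ∫ x in a₁..v₁, (G x - G a₂) := by
    apply intervalIntegral.integral_mono_on h1v1 (hii a₁ a₁ v₁) (hii a₂ a₁ v₁)
    intro x _
    linarith
  -- Step 2: enlarge the interval
  have step2 : (∫ x in a₁..v₁, (G x - G a₂)) ≤ ∫ x in a₂..v₂, (G x - G a₂) := by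
    have e1 : (∫ x in a₂..a₁, (G x - G a₂)) + (∫ x in a₁..v₁, (G x - G a₂))
        = ∫ x in a₂..v₁, (G x - G a₂) :=
      intervalIntegral.integral_add_adjacent_intervals (hii a₂ a₂ a₁) (hii a₂ a₁ v₁)
    have e2 : (∫ x in a₂..v₁, (G x - G a₂)) + (∫ x in v₁..v₂, (G x - G a₂))
        = ∫ x in a₂..v₂, (G x - G a₂) :=
      intervalIntegral.integral_add_adjacent_intervals (hii a₂ a₂ v₁) (hii a₂ v₁ v₂)
    have n1 : 0 ≤ ∫ x in a₂..a₁, (G x - G a₂) := by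
      apply intervalIntegral.integral_nonneg h21
      intro u hu
      have := hG_mono hu.1
      linarith
    have n2 : 0 ≤ ∫ x in v₁..v₂, (G x - G a₂) := by
      apply intervalIntegral.integral_nonneg h12.le
      intro u hu
      have : a₂ ≤ u := le_trans h21 (le_trans h1v1 hu.1)
      have := hG_mono this
      linarith
    linarith
  have hF : (∫ x in a₁..v₁, (G x - G a₁)) ≤ ∫ x in a₂..v₂, (G x - G a₂) :=
    le_trans step1 step2
  nlinarith
end

section
/- Let g : ℝ → ℝ be a continuous, everywhere positive probability density with CDF G(x) = ∫_{−∞}^{x} g(t) dt, ∫_ℝ g = 1, mean μ₀ = ∫_ℝ x·g(x) dx, and μ₀ > 0. Let β ∈ (0,1), q ∈ (0,1), and let r > r₀ > 0, so that s := r₀μ₀/r < μ₀. Define x̲(v) = 2s/(1+q) − ((1−q)/(1+q))·v and R(v) = β·∫_{x̲(v)}^{v} (G(x) − G(x̲(v))) dx − (1−β)·(μ₀ − v). Then R has exactly one zero x̄ in [s, +∞), this zero satisfies s < x̄ < μ₀, and the corresponding lower threshold x̲ := x̲(x̄) satisfies x̲ < s. In particular x̲ < s < x̄. -/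
open MeasureTheory Set

/-- Existence and uniqueness of the equilibrium thresholds when `r > r₀` (Proposition 2):
`R` has a unique zero `x̄` in `[s, +∞)`, it satisfies `s < x̄ < μ₀`, and the corresponding
lower threshold `x̲ = x̲(x̄)` satisfies `x̲ < s`; so the withholding interval straddles
`s = r₀μ₀/r` (Corollary 1). -/
theorem stmt_9 (g : ℝ → ℝ) (hg_cont : Continuous g) (hg_pos : ∀ x, 0 < g x)
    (hg_one : (∫ x, g x) = 1)
    (hxg_int : Integrable (fun x => x * g x))
    (μ₀ : ℝ) (hμ₀ : μ₀ = ∫ x, x * g x) (hμ₀pos : 0 < μ₀)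
    (G : ℝ → ℝ) (hG : ∀ x, G x = ∫ t in Iic x, g t)
    (β : ℝ) (hβ : β ∈ Set.Ioo (0 : ℝ) 1)
    (q : ℝ) (hq : q ∈ Set.Ioo (0 : ℝ) 1)
    (r r₀ : ℝ) (hr₀ : 0 < r₀) (hrr₀ : r₀ < r)
    (s : ℝ) (hs : s = r₀ * μ₀ / r)
    (xlow : ℝ → ℝ) (hxlow : ∀ v, xlow v = 2 * s / (1 + q) - ((1 - q) / (1 + q)) * v)
    (R : ℝ → ℝ)
    (hR : ∀ v, R v = β * (∫ x in (xlow v)..v, (G x - G (xlow v))) - (1 - β) * (μ₀ - v)) :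
    ∃ xu, (xu ∈ Set.Ici s ∧ R xu = 0) ∧
      (∀ y ∈ Set.Ici s, R y = 0 → y = xu) ∧
      s < xu ∧ xu < μ₀ ∧ xlow xu < s := by
  obtain ⟨hβ0, hβ1⟩ := hβ
  obtain ⟨hq0, hq1⟩ := hq
  have hq1' : (0:ℝ) < 1 + q := by linarith
  have hg_int : Integrable g := by
    by_contra h
    rw [integral_undef h] at hg_one
    norm_num at hg_one
  have hsμ : s < μ₀ := by
    rw [hs, div_lt_iff₀ (by linarith)]
    nlinarith
  have hxlow_s : xlow s = s := by rw [hxlow]; field_simp; ring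
  obtain ⟨c, hc⟩ : ∃ c : ℝ, c = -((1 - q) / (1 + q)) := ⟨_, rfl⟩
  have hc_neg : c < 0 := by
    have h : 0 < (1 - q) / (1 + q) := div_pos (by linarith) hq1'
    rw [hc]; linarith
  have hc_gt : -1 < c := by
    rw [hc]
    rw [neg_lt_neg_iff, div_lt_one hq1']
    linarith
  have hxlow' : ∀ v, xlow v = 2 * s / (1 + q) + c * v := by
    intro v; rw [hxlow, hc]; ring
  have hxlow_lt : ∀ v, s < v → xlow v < s := by
    intro v hv
    have : xlow v < xlow s := by
      rw [hxlow' v, hxlow' s]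
      linarith [mul_lt_mul_of_neg_left hv hc_neg]
    linarith [hxlow_s ▸ this]
  -- G and its properties
  have hGdiff : ∀ x y : ℝ, G y - G x = ∫ t in x..y, g t := by
    intro x y
    rw [hG, hG]
    exact intervalIntegral.integral_Iic_sub_Iic (hg_int.integrableOn) (hg_int.integrableOn)
  have hGderiv : ∀ x, HasDerivAt G (g x) x := by
    intro x
    have h1 : HasDerivAt (fun y => G 0 + ∫ t in (0:ℝ)..y, g t) (g x) x := by
      refine HasDerivAt.const_add _ ?_
      refine intervalIntegral.integral_hasDerivAt_right
        hg_int.intervalIntegrable ?_ hg_cont.continuousAt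
      exact hg_cont.aestronglyMeasurable.stronglyMeasurableAtFilter
    have : (fun y => G 0 + ∫ t in (0:ℝ)..y, g t) = G := by
      funext y
      rw [← hGdiff 0 y]; ring
    rwa [this] at h1
  have hG_cont : Continuous G := by
    refine continuous_iff_continuousAt.mpr fun x => (hGderiv x).continuousAt
  have hG_mono : StrictMono G := by
    intro x y hxy
    have : 0 < ∫ t in x..y, g t :=
      intervalIntegral.intervalIntegral_pos_of_pos (f := g) (hg_cont.intervalIntegrable _ _)
        hg_pos hxy
    linarith [hGdiff x y]
  -- rewrite R
  set P : ℝ → ℝ := fun x => ∫ t in (0:ℝ)..x, G t with hP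
  have hPderiv : ∀ x, HasDerivAt P (G x) x := by
    intro x
    refine intervalIntegral.integral_hasDerivAt_right
      (hG_cont.intervalIntegrable _ _) ?_ hG_cont.continuousAt
    exact hG_cont.aestronglyMeasurable.stronglyMeasurableAtFilter
  have hR' : ∀ v, R v = β * (P v - P (xlow v) - (v - xlow v) * G (xlow v)) - (1 - β) * (μ₀ - v) := by
    intro v
    rw [hR v]
    have h1 : (∫ x in (xlow v)..v, (G x - G (xlow v)))
        = (∫ x in (xlow v)..v, G x) - (v - xlow v) * G (xlow v) := by
      rw [intervalIntegral.integral_sub (hG_cont.intervalIntegrable _ _)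
        (intervalIntegrable_const), intervalIntegral.integral_const, smul_eq_mul]
    have h2 : (∫ x in (xlow v)..v, G x) = P v - P (xlow v) := by
      rw [hP]
      have := intervalIntegral.integral_add_adjacent_intervals (μ := volume)
        (hG_cont.intervalIntegrable (0:ℝ) (xlow v)) (hG_cont.intervalIntegrable (xlow v) v)
      linarith [this]
    rw [h1, h2]
  -- derivative of R
  set D : ℝ → ℝ := fun v => β * (G v - G (xlow v) * c - ((1 - c) * G (xlow v)
      + (v - xlow v) * (g (xlow v) * c))) + (1 - β) with hD
  have hxlowderiv : ∀ v, HasDerivAt xlow c v := by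
    intro v
    have h : HasDerivAt (fun v => 2 * s / (1 + q) + c * v) c v := by
      simpa using (hasDerivAt_id v).const_mul c |>.const_add (2 * s / (1 + q))
    exact h.congr_of_eventuallyEq (Filter.Eventually.of_forall hxlow')
  have hRderiv : ∀ v, HasDerivAt R (D v) v := by
    intro v
    have hPv : HasDerivAt (fun v => P v) (G v) v := hPderiv v
    have hPa : HasDerivAt (fun v => P (xlow v)) (G (xlow v) * c) v :=
      (hPderiv (xlow v)).comp v (hxlowderiv v)
    have hGa : HasDerivAt (fun v => G (xlow v)) (g (xlow v) * c) v :=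
      (hGderiv (xlow v)).comp v (hxlowderiv v)
    have hlin : HasDerivAt (fun v => v - xlow v) (1 - c) v :=
      (hasDerivAt_id v).sub (hxlowderiv v)
    have hprod : HasDerivAt (fun v => (v - xlow v) * G (xlow v))
        ((1 - c) * G (xlow v) + (v - xlow v) * (g (xlow v) * c)) v := hlin.mul hGa
    have hmain : HasDerivAt (fun v => β * (P v - P (xlow v) - (v - xlow v) * G (xlow v))
        - (1 - β) * (μ₀ - v)) (D v) v := by
      have h1 := ((hPv.sub hPa).sub hprod).const_mul β
      have h2 : HasDerivAt (fun v : ℝ => (1 - β) * (μ₀ - v)) (-(1 - β)) v := by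
        simpa using ((hasDerivAt_const v μ₀).sub (hasDerivAt_id v)).const_mul (1 - β)
      exact (h1.sub h2).congr_deriv (by rw [hD]; ring)
    exact hmain.congr_of_eventuallyEq (Filter.Eventually.of_forall hR')
  have hD_pos : ∀ v, s < v → 0 < D v := by
    intro v hv
    have ha : xlow v < s := hxlow_lt v hv
    have h1 : G (xlow v) < G v := hG_mono (by linarith)
    have h2 : 0 < g (xlow v) := hg_pos _
    have h3 : 0 < v - xlow v := by linarith
    have hterm : 0 < -((v - xlow v) * (g (xlow v) * c)) := by
      have : (v - xlow v) * (g (xlow v) * c) < 0 :=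
        mul_neg_of_pos_of_neg h3 (mul_neg_of_pos_of_neg h2 hc_neg)
      linarith
    have hgoal : 0 < β * (G v - G (xlow v) * c - ((1 - c) * G (xlow v)
        + (v - xlow v) * (g (xlow v) * c))) + (1 - β) := by
      nlinarith [mul_pos hβ0 (sub_pos.mpr h1), mul_pos hβ0 hterm]
    simpa [hD] using hgoal
  have hRcont : Continuous R := by
    exact continuous_iff_continuousAt.mpr fun x => (hRderiv x).continuousAt
  have hRmono : StrictMonoOn R (Ici s) := by
    refine strictMonoOn_of_deriv_pos (convex_Ici s) hRcont.continuousOn ?_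
    intro x hx
    rw [interior_Ici] at hx
    rw [(hRderiv x).deriv]
    exact hD_pos x hx
  -- sign at s
  have hRs : R s < 0 := by
    rw [hR s, hxlow_s, intervalIntegral.integral_same]
    nlinarith
  -- sign at μ₀
  have hRμ : 0 < R μ₀ := by
    rw [hR μ₀]
    have ha : xlow μ₀ < s := hxlow_lt μ₀ hsμ
    have hpos : 0 < ∫ x in (xlow μ₀)..μ₀, (G x - G (xlow μ₀)) := by
      refine intervalIntegral.intervalIntegral_pos_of_pos_on
        ((hG_cont.sub continuous_const).intervalIntegrable _ _) ?_ (by linarith)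
      intro x hx
      have := hG_mono hx.1
      linarith
    nlinarith
  -- IVT
  have hzero : ∃ xu ∈ Ioo s μ₀, R xu = 0 := by
    have := intermediate_value_Ioo (le_of_lt hsμ) hRcont.continuousOn (a := s) (b := μ₀)
    have h0 : (0:ℝ) ∈ Ioo (R s) (R μ₀) := ⟨hRs, hRμ⟩
    obtain ⟨xu, hxu, hxu0⟩ := this h0
    exact ⟨xu, hxu, hxu0⟩
  obtain ⟨xu, ⟨hxu1, hxu2⟩, hxu0⟩ := hzero
  refine ⟨xu, ⟨le_of_lt hxu1, hxu0⟩, ?_, hxu1, hxu2, hxlow_lt xu hxu1⟩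
  intro y hy hy0
  exact hRmono.injOn hy (le_of_lt hxu1) (by rw [hy0, hxu0])
end

section
/- Let g : ℝ → ℝ be a continuous, everywhere positive probability density with CDF G(x) = ∫_{−∞}^{x} g(t) dt, ∫_ℝ g = 1, mean μ₀ = ∫_ℝ x·g(x) dx, and μ₀ > 0. Let q ∈ (0,1) and 0 < r < r₀, and set s := r₀μ₀/r. For β ∈ (0,1) define x̄_β(u) = 2s/(1+q) − ((1−q)/(1+q))·u, let x̲(β) be the unique zero in (μ₀, s) of Q_β(u) = β·∫_{u}^{x̄_β(u)} (G(x) − G(x̄_β(u))) dx − (1−β)·(μ₀ − u), and let x̄(β) = x̄_β(x̲(β)). Then for all β₁ < β₂ in (0,1): x̲(β₁) < x̲(β₂) and x̄(β₁) > x̄(β₂). -/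
open MeasureTheory Set

/-- Monotonicity of the integral term: shrinking the interval `[a, x̄ₐ]` to `[b, x̄_b]`
(with `a ≤ b ≤ x̄_b ≤ x̄ₐ`) increases `∫ (G x - G x̄)` when `G` is monotone. -/
lemma mono_I_aux (G : ℝ → ℝ) (hG : Monotone G) (a b xb xa : ℝ)
    (hab : a ≤ b) (hbxb : b ≤ xb) (hxx : xb ≤ xa) :
    (∫ x in a..xa, (G x - G xa)) ≤ ∫ x in b..xb, (G x - G xb) := by
  have hint : ∀ c d : ℝ, IntervalIntegrable G volume c d := fun c d =>
    (hG.monotoneOn _).intervalIntegrable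
  have hGab : G xb ≤ G xa := hG hxx
  rw [intervalIntegral.integral_sub (hint a xa) intervalIntegrable_const,
      intervalIntegral.integral_sub (hint b xb) intervalIntegrable_const,
      intervalIntegral.integral_const, intervalIntegral.integral_const]
  have hsplit : (∫ x in a..xa, G x)
      = (∫ x in a..b, G x) + (∫ x in b..xb, G x) + (∫ x in xb..xa, G x) := by
    rw [intervalIntegral.integral_add_adjacent_intervals (hint a b) (hint b xb),
        intervalIntegral.integral_add_adjacent_intervals (hint a xb) (hint xb xa)]
  have h1 : (∫ x in a..b, G x) ≤ (b - a) * G xa := by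
    calc (∫ x in a..b, G x) ≤ ∫ _x in a..b, G xa := by
          apply intervalIntegral.integral_mono_on hab (hint a b) intervalIntegrable_const
          intro x hx
          exact hG (le_trans hx.2 (le_trans hbxb hxx))
      _ = (b - a) * G xa := by simp [mul_comm]
  have h2 : (∫ x in xb..xa, G x) ≤ (xa - xb) * G xa := by
    calc (∫ x in xb..xa, G x) ≤ ∫ _x in xb..xa, G xa := by
          apply intervalIntegral.integral_mono_on hxx (hint xb xa) intervalIntegrable_const
          intro x hx
          exact hG hx.2
      _ = (xa - xb) * G xa := by simp [mul_comm]
  have h3 : 0 ≤ (xb - b) * (G xa - G xb) :=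
    mul_nonneg (by linarith) (by linarith)
  simp only [smul_eq_mul]
  nlinarith [h1, h2, h3, hsplit]

/-- Part 1 of Proposition 4 (case `r < r₀`): the equilibrium disclosure thresholds satisfy
`∂x̲/∂β > 0` and `∂x̄/∂β < 0`, i.e. the withholding interval shrinks as the investor's
competence `β` grows. -/
theorem stmt_10 (g : ℝ → ℝ) (hg_cont : Continuous g) (hg_pos : ∀ x, 0 < g x)
    (hg_one : (∫ x, g x) = 1)
    (hxg_int : Integrable (fun x => x * g x))
    (μ₀ : ℝ) (hμ₀ : μ₀ = ∫ x, x * g x) (hμ₀pos : 0 < μ₀)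
    (G : ℝ → ℝ) (hG : ∀ x, G x = ∫ t in Iic x, g t)
    (q : ℝ) (hq : q ∈ Set.Ioo (0 : ℝ) 1)
    (r r₀ : ℝ) (hr : 0 < r) (hrr₀ : r < r₀)
    (s : ℝ) (hs : s = r₀ * μ₀ / r)
    (xbar : ℝ → ℝ) (hxbar : ∀ u, xbar u = 2 * s / (1 + q) - ((1 - q) / (1 + q)) * u)
    (Q : ℝ → ℝ → ℝ)
    (hQ : ∀ β u, Q β u
      = β * (∫ x in u..(xbar u), (G x - G (xbar u))) - (1 - β) * (μ₀ - u))
    (β₁ β₂ : ℝ) (hβ₁ : β₁ ∈ Set.Ioo (0 : ℝ) 1) (hβ₂ : β₂ ∈ Set.Ioo (0 : ℝ) 1)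
    (hββ : β₁ < β₂)
    (xl₁ xl₂ : ℝ) (hxl₁ : xl₁ ∈ Set.Ioo μ₀ s) (hxl₂ : xl₂ ∈ Set.Ioo μ₀ s)
    (hz₁ : Q β₁ xl₁ = 0) (hz₂ : Q β₂ xl₂ = 0) :
    xl₁ < xl₂ ∧ xbar xl₂ < xbar xl₁ := by
  obtain ⟨hq0, hq1⟩ := hq
  have hq1' : (0:ℝ) < 1 + q := by linarith
  -- integrability of g
  have hg_int : Integrable g := by
    by_contra h
    rw [integral_undef h] at hg_one
    norm_num at hg_one
  -- monotonicity of G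
  have hGmono : Monotone G := by
    intro x y hxy
    rw [hG, hG]
    exact setIntegral_mono_set hg_int.integrableOn
      (Filter.Eventually.of_forall fun t => (hg_pos t).le)
      (HasSubset.Subset.eventuallyLE (Iic_subset_Iic.mpr hxy))
  -- xbar is antitone
  have hxbar_anti : ∀ u v : ℝ, u ≤ v → xbar v ≤ xbar u := by
    intro u v huv
    have h : xbar u - xbar v = (1 - q) / (1 + q) * (v - u) := by
      rw [hxbar, hxbar]; ring
    nlinarith [mul_nonneg (div_nonneg (by linarith : (0:ℝ) ≤ 1 - q) hq1'.le)
      (by linarith : (0:ℝ) ≤ v - u)]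
  have hxbar_anti' : ∀ u v : ℝ, u < v → xbar v < xbar u := by
    intro u v huv
    have h : xbar u - xbar v = (1 - q) / (1 + q) * (v - u) := by
      rw [hxbar, hxbar]; ring
    nlinarith [mul_pos (div_pos (by linarith : (0:ℝ) < 1 - q) hq1')
      (by linarith : (0:ℝ) < v - u)]
  -- u < s implies u ≤ xbar u
  have hxbar_ge : ∀ u : ℝ, u < s → u ≤ xbar u := by
    intro u hu
    have h : xbar u - u = 2 * (s - u) / (1 + q) := by
      rw [hxbar]; field_simp; ring
    nlinarith [div_pos (by linarith : (0:ℝ) < 2 * (s - u)) hq1']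
  have h1 : xl₁ < xl₂ := by
    by_contra hcon
    push_neg at hcon  -- xl₂ ≤ xl₁
    have hI : (∫ x in xl₂..(xbar xl₂), (G x - G (xbar xl₂)))
        ≤ ∫ x in xl₁..(xbar xl₁), (G x - G (xbar xl₁)) :=
      mono_I_aux G hGmono xl₂ xl₁ (xbar xl₁) (xbar xl₂) hcon
        (hxbar_ge xl₁ hxl₁.2) (hxbar_anti xl₂ xl₁ hcon)
    set I₁ := ∫ x in xl₁..(xbar xl₁), (G x - G (xbar xl₁)) with hI₁
    set I₂ := ∫ x in xl₂..(xbar xl₂), (G x - G (xbar xl₂)) with hI₂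
    rw [hQ] at hz₁ hz₂
    -- Q β₂ xl₁ < 0
    have hQ1 : β₂ * I₁ - (1 - β₂) * (μ₀ - xl₁) < 0 := by
      have hkey : β₁ * (β₂ * I₁ - (1 - β₂) * (μ₀ - xl₁))
          = (β₂ - β₁) * (μ₀ - xl₁) + β₂ * (β₁ * I₁ - (1 - β₁) * (μ₀ - xl₁)) := by ring
      rw [hz₁, mul_zero, add_zero] at hkey
      nlinarith [mul_pos (by linarith : (0:ℝ) < β₂ - β₁)
        (by linarith [hxl₁.1] : (0:ℝ) < xl₁ - μ₀), hβ₁.1]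
    -- Q β₂ xl₂ ≤ Q β₂ xl₁
    have hQ2 : β₂ * I₂ - (1 - β₂) * (μ₀ - xl₂) ≤ β₂ * I₁ - (1 - β₂) * (μ₀ - xl₁) := by
      nlinarith [mul_le_mul_of_nonneg_left hI hβ₂.1.le,
        mul_nonneg (by linarith [hβ₂.2] : (0:ℝ) ≤ 1 - β₂)
          (by linarith : (0:ℝ) ≤ xl₁ - xl₂)]
    rw [hz₂] at hQ2
    linarith
  exact ⟨h1, hxbar_anti' xl₁ xl₂ h1⟩
end

section
/- Let g : ℝ → ℝ be a continuous, everywhere positive probability density with CDF G(x) = ∫_{−∞}^{x} g(t) dt, ∫_ℝ g = 1, mean μ₀ = ∫_ℝ x·g(x) dx, and μ₀ > 0. Let β ∈ (0,1) and 0 < r < r₀, and set s := r₀μ₀/r. For q ∈ (0,1) define x̄_q(u) = 2s/(1+q) − ((1−q)/(1+q))·u, let x̲(q) be the unique zero in (μ₀, s) of Q_q(u) = β·∫_{u}^{x̄_q(u)} (G(x) − G(x̄_q(u))) dx − (1−β)·(μ₀ − u), and let x̄(q) = x̄_q(x̲(q)). Then for all q₁ < q₂ in (0,1): x̲(q₂)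 < x̲(q₁) and x̄(q₂) < x̄(q₁). -/
open MeasureTheory Set

set_option maxHeartbeats 800000

lemma aux_strictMono_G {g G : ℝ → ℝ} (hg_int : Integrable g) (hg_pos : ∀ x, 0 < g x)
    (hG : ∀ x, G x = ∫ t in Iic x, g t) : StrictMono G := by
  intro a b hab
  have h1 : G b - G a = ∫ t in a..b, g t := by
    rw [hG, hG]; exact intervalIntegral.integral_Iic_sub_Iic hg_int.integrableOn hg_int.integrableOn
  have h2 : (0:ℝ) < ∫ t in a..b, g t := by
    rw [intervalIntegral.integral_of_le hab.le]
    rw [setIntegral_pos_iff_support_of_nonneg_ae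
      (Filter.Eventually.of_forall fun x => (hg_pos x).le) hg_int.integrableOn]
    have hsupp : Function.support g = Set.univ := by
      ext x; simp [Function.mem_support, (hg_pos x).ne']
    rw [hsupp, Set.univ_inter, Real.volume_Ioc]
    simp [hab]
  linarith

/-- Part 2(a) of Proposition 4 (case `r < r₀`): both equilibrium disclosure thresholds
decrease in the firm's information environment `q`, i.e. `∂x̲/∂q < 0` and `∂x̄/∂q < 0`. -/
theorem stmt_11 (g : ℝ → ℝ) (hg_cont : Continuous g) (hg_pos : ∀ x, 0 < g x)
    (hg_one : (∫ x, g x) = 1)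
    (hxg_int : Integrable (fun x => x * g x))
    (μ₀ : ℝ) (hμ₀ : μ₀ = ∫ x, x * g x) (hμ₀pos : 0 < μ₀)
    (G : ℝ → ℝ) (hG : ∀ x, G x = ∫ t in Iic x, g t)
    (β : ℝ) (hβ : β ∈ Set.Ioo (0 : ℝ) 1)
    (r r₀ : ℝ) (hr : 0 < r) (hrr₀ : r < r₀)
    (s : ℝ) (hs : s = r₀ * μ₀ / r)
    (xbar : ℝ → ℝ → ℝ)
    (hxbar : ∀ q u, xbar q u = 2 * s / (1 + q) - ((1 - q) / (1 + q)) * u)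
    (Q : ℝ → ℝ → ℝ)
    (hQ : ∀ q u, Q q u
      = β * (∫ x in u..(xbar q u), (G x - G (xbar q u))) - (1 - β) * (μ₀ - u))
    (q₁ q₂ : ℝ) (hq₁ : q₁ ∈ Set.Ioo (0 : ℝ) 1) (hq₂ : q₂ ∈ Set.Ioo (0 : ℝ) 1)
    (hqq : q₁ < q₂)
    (xl₁ xl₂ : ℝ) (hxl₁ : xl₁ ∈ Set.Ioo μ₀ s) (hxl₂ : xl₂ ∈ Set.Ioo μ₀ s)
    (hz₁ : Q q₁ xl₁ = 0) (hz₂ : Q q₂ xl₂ = 0) :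
    xl₂ < xl₁ ∧ xbar q₂ xl₂ < xbar q₁ xl₁ := by
  obtain ⟨hβ0, hβ1⟩ := hβ
  obtain ⟨hq₁0, hq₁1⟩ := hq₁
  obtain ⟨hq₂0, hq₂1⟩ := hq₂
  obtain ⟨hμl₁, hl₁s⟩ := hxl₁
  obtain ⟨hμl₂, hl₂s⟩ := hxl₂
  -- g is integrable
  have hg_int : Integrable g := by
    by_contra h
    rw [integral_undef h] at hg_one
    norm_num at hg_one
  have hGM : StrictMono G := aux_strictMono_G hg_int hg_pos hG
  have hGmono : Monotone G := hGM.monotone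
  have hGii : ∀ a b c : ℝ, IntervalIntegrable (fun x => G x - G c) volume a b :=
    fun a b c => (hGmono.intervalIntegrable).sub intervalIntegrable_const
  -- The key function
  set F : ℝ → ℝ → ℝ :=
    fun u b => β * (∫ x in u..b, (G x - G b)) - (1 - β) * (μ₀ - u) with hF
  have hQF : ∀ q u, Q q u = F u (xbar q u) := fun q u => hQ q u
  -- Monotonicity in u (quantitative)
  have hM2 : ∀ u u' b : ℝ, u ≤ u' → u' ≤ b →
      F u b + (1 - β) * (u' - u) ≤ F u' b := by
    intro u u' b huu hub
    have hsplit : (∫ x in u..u', (G x - G b)) + (∫ x in u'..b, (G x - G b))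
        = ∫ x in u..b, (G x - G b) :=
      intervalIntegral.integral_add_adjacent_intervals (hGii u u' b) (hGii u' b b)
    have hneg : (∫ x in u..u', (G x - G b)) ≤ 0 := by
      have hmono := intervalIntegral.integral_mono_on (μ := volume)
        (f := fun x => G x - G b) (g := fun _ => (0:ℝ)) huu (hGii u u' b)
        intervalIntegrable_const
        (fun x hx => sub_nonpos.mpr (hGmono (hx.2.trans hub)))
      simpa using hmono
    have hkey : F u' b - F u b
        = -(β * (∫ x in u..u', (G x - G b))) + (1 - β) * (u' - u) := by
      simp only [hF]
      rw [← hsplit]; ring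
    have hbn : β * (∫ x in u..u', (G x - G b)) ≤ 0 :=
      mul_nonpos_of_nonneg_of_nonpos hβ0.le hneg
    linarith
  have hM2lt : ∀ u u' b : ℝ, u < u' → u' ≤ b → F u b < F u' b := by
    intro u u' b huu hub
    have := hM2 u u' b huu.le hub
    nlinarith
  have hM2le : ∀ u u' b : ℝ, u ≤ u' → u' ≤ b → F u b ≤ F u' b := by
    intro u u' b huu hub
    have := hM2 u u' b huu hub
    nlinarith
  -- Strict monotonicity in b
  have hM1 : ∀ u b b' : ℝ, u ≤ b → b < b' → F u b' < F u b := by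
    intro u b b' hub hbb
    have hsplit : (∫ x in u..b, (G x - G b')) + (∫ x in b..b', (G x - G b'))
        = ∫ x in u..b', (G x - G b') :=
      intervalIntegral.integral_add_adjacent_intervals (hGii u b b') (hGii b b' b')
    have hconst : (∫ x in u..b, (G x - G b'))
        = (∫ x in u..b, (G x - G b)) + (b - u) * (G b - G b') := by
      have h1 : (∫ x in u..b, (G x - G b'))
          = ∫ x in u..b, ((G x - G b) + (G b - G b')) := by
        apply intervalIntegral.integral_congr
        intro x _; ring
      rw [h1, intervalIntegral.integral_add (hGii u b b) intervalIntegrable_const,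
        intervalIntegral.integral_const, smul_eq_mul]
    have hmid : (∫ x in b..b', (G x - G b')) < 0 := by
      set m := (b + b') / 2 with hm
      have hbm : b < m := by rw [hm]; linarith
      have hmb : m < b' := by rw [hm]; linarith
      have hsp2 : (∫ x in b..m, (G x - G b')) + (∫ x in m..b', (G x - G b'))
          = ∫ x in b..b', (G x - G b') :=
        intervalIntegral.integral_add_adjacent_intervals (hGii b m b') (hGii m b' b')
      have h1 : (∫ x in b..m, (G x - G b')) ≤ (m - b) * G m - (m - b) * G b' := by
        have hmono := intervalIntegral.integral_mono_on (μ := volume)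
          (f := fun x => G x - G b') (g := fun _ => G m - G b') hbm.le (hGii b m b')
          intervalIntegrable_const
          (fun x hx => sub_le_sub_right (hGmono hx.2) _)
        simpa [smul_eq_mul, mul_sub] using hmono
      have h2 : (∫ x in m..b', (G x - G b')) ≤ 0 := by
        have hmono := intervalIntegral.integral_mono_on (μ := volume)
          (f := fun x => G x - G b') (g := fun _ => (0:ℝ)) hmb.le (hGii m b' b')
          intervalIntegrable_const
          (fun x hx => sub_nonpos.mpr (hGmono hx.2))
        simpa using hmono
      have h3 : G m < G b' := hGM hmb
      nlinarith [sub_pos.mpr hbm]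
    have hle : (b - u) * (G b - G b') ≤ 0 :=
      mul_nonpos_of_nonneg_of_nonpos (by linarith)
        (sub_nonpos.mpr (hGmono hbb.le))
    have hkey : F u b' - F u b
        = β * ((b - u) * (G b - G b') + (∫ x in b..b', (G x - G b'))) := by
      simp only [hF]
      rw [← hsplit, hconst]; ring
    nlinarith [mul_neg_of_pos_of_neg hβ0 (show (b - u) * (G b - G b')
      + (∫ x in b..b', (G x - G b')) < 0 by linarith)]
  have hM1le : ∀ u b b' : ℝ, u ≤ b → b ≤ b' → F u b' ≤ F u b := by
    intro u b b' hub hbb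
    rcases eq_or_lt_of_le hbb with he | hlt
    · rw [he]
    · exact (hM1 u b b' hub hlt).le
  -- xbar rewritten
  have hxb : ∀ q u : ℝ, 0 < q → xbar q u = s + ((1 - q) / (1 + q)) * (s - u) := by
    intro q u hq
    rw [hxbar]
    have h1q : (1 + q) ≠ 0 := by positivity
    field_simp
    ring
  have hc₁ : 0 < (1 - q₁) / (1 + q₁) := by
    apply div_pos <;> linarith
  have hc₂ : 0 < (1 - q₂) / (1 + q₂) := by
    apply div_pos <;> linarith
  have hcc : (1 - q₂) / (1 + q₂) < (1 - q₁) / (1 + q₁) := by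
    rw [div_lt_div_iff₀ (by linarith) (by linarith)]
    nlinarith
  -- xbar bounds: for u < s, s < xbar q u
  have hxgt : ∀ q u : ℝ, 0 < q → q < 1 → u < s → s < xbar q u := by
    intro q u hq0 hq1 hus
    rw [hxb q u hq0]
    have h1 : 0 < (1 - q) / (1 + q) := by apply div_pos <;> linarith
    nlinarith [mul_pos h1 (show (0:ℝ) < s - u by linarith)]
  have hb₁ : s < xbar q₁ xl₁ := hxgt q₁ xl₁ hq₁0 hq₁1 hl₁s
  have hb₂ : s < xbar q₂ xl₁ := hxgt q₂ xl₁ hq₂0 hq₂1 hl₁s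
  have hb₂' : s < xbar q₂ xl₂ := hxgt q₂ xl₂ hq₂0 hq₂1 hl₂s
  -- xbar decreasing in q (at xl₁)
  have hqdec : xbar q₂ xl₁ < xbar q₁ xl₁ := by
    rw [hxb q₁ xl₁ hq₁0, hxb q₂ xl₁ hq₂0]
    have hsu : 0 < s - xl₁ := by linarith
    have hmul := mul_lt_mul_of_pos_right hcc hsu
    linarith
  -- Step 1 : Q q₂ xl₁ > 0
  have hpos : 0 < F xl₁ (xbar q₂ xl₁) := by
    have h1 : F xl₁ (xbar q₁ xl₁) < F xl₁ (xbar q₂ xl₁) :=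
      hM1 xl₁ (xbar q₂ xl₁) (xbar q₁ xl₁) (by linarith) hqdec
    have h0 : F xl₁ (xbar q₁ xl₁) = 0 := by rw [← hQF]; exact hz₁
    linarith
  have hz₂' : F xl₂ (xbar q₂ xl₂) = 0 := by rw [← hQF]; exact hz₂
  -- Step 2 : xl₂ < xl₁
  have hstep2 : xl₂ < xl₁ := by
    by_contra h
    push_neg at h
    rcases eq_or_lt_of_le h with he | hlt
    · rw [he] at hpos
      linarith
    · -- xl₁ < xl₂
      have hbord : xbar q₂ xl₂ < xbar q₂ xl₁ := by
        rw [hxb q₂ xl₁ hq₂0, hxb q₂ xl₂ hq₂0]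
        have hmul := mul_lt_mul_of_pos_left (show s - xl₂ < s - xl₁ by linarith) hc₂
        linarith
      have h1 : F xl₁ (xbar q₂ xl₁) < F xl₁ (xbar q₂ xl₂) :=
        hM1 xl₁ (xbar q₂ xl₂) (xbar q₂ xl₁) (by linarith) hbord
      have h2 : F xl₁ (xbar q₂ xl₂) ≤ F xl₂ (xbar q₂ xl₂) :=
        hM2le xl₁ xl₂ (xbar q₂ xl₂) hlt.le (by linarith)
      linarith
  refine ⟨hstep2, ?_⟩
  -- Step 3 : xbar q₂ xl₂ < xbar q₁ xl₁
  by_contra h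
  push_neg at h
  have h1 : F xl₂ (xbar q₂ xl₂) ≤ F xl₂ (xbar q₁ xl₁) :=
    hM1le xl₂ (xbar q₁ xl₁) (xbar q₂ xl₂) (by linarith) h
  have h2 : F xl₂ (xbar q₁ xl₁) < F xl₁ (xbar q₁ xl₁) :=
    hM2lt xl₂ xl₁ (xbar q₁ xl₁) hstep2 (by linarith)
  have h0 : F xl₁ (xbar q₁ xl₁) = 0 := by rw [← hQF]; exact hz₁
  linarith
end

section
/- Let g : ℝ → ℝ be a continuous, everywhere positive probability density with CDF G(x) = ∫_{−∞}^{x} g(t) dt, ∫_ℝ g = 1, mean μ₀ = ∫_ℝ x·g(x) dx, and μ₀ > 0. Let q ∈ (0,1) and r > r₀ > 0, and set s := r₀μ₀/r. For β ∈ (0,1) define x̲_β(v) = 2s/(1+q) − ((1−q)/(1+q))·v, let x̄(β) be the unique zero in (s, μ₀) of R_β(v) = β·∫_{x̲_β(v)}^{v} (G(x) − G(x̲_β(v))) dx − (1−β)·(μ₀ − v), and let x̲(β) = x̲_β(x̄(β)). Then for all β₁ < β₂ in (0,1): x̄(β₁) > x̄(β₂) and x̲(β₁) < x̲(β₂). 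-/
open MeasureTheory Set

/-- Part 1 of Proposition 4 (case `r > r₀`): the equilibrium disclosure thresholds satisfy
`∂x̄/∂β < 0` and `∂x̲/∂β > 0`, i.e. the elaborateness of reports increases with the
investor's competence `β`. -/
theorem stmt_12 (g : ℝ → ℝ) (hg_cont : Continuous g) (hg_pos : ∀ x, 0 < g x)
    (hg_one : (∫ x, g x) = 1)
    (hxg_int : Integrable (fun x => x * g x))
    (μ₀ : ℝ) (hμ₀ : μ₀ = ∫ x, x * g x) (hμ₀pos : 0 < μ₀)
    (G : ℝ → ℝ) (hG : ∀ x, G x = ∫ t in Iic x, g t)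
    (q : ℝ) (hq : q ∈ Set.Ioo (0 : ℝ) 1)
    (r r₀ : ℝ) (hr₀ : 0 < r₀) (hrr₀ : r₀ < r)
    (s : ℝ) (hs : s = r₀ * μ₀ / r)
    (xlow : ℝ → ℝ) (hxlow : ∀ v, xlow v = 2 * s / (1 + q) - ((1 - q) / (1 + q)) * v)
    (R : ℝ → ℝ → ℝ)
    (hR : ∀ β v, R β v
      = β * (∫ x in (xlow v)..v, (G x - G (xlow v))) - (1 - β) * (μ₀ - v))
    (β₁ β₂ : ℝ) (hβ₁ : β₁ ∈ Set.Ioo (0 : ℝ) 1) (hβ₂ : β₂ ∈ Set.Ioo (0 : ℝ) 1)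
    (hββ : β₁ < β₂)
    (xu₁ xu₂ : ℝ) (hxu₁ : xu₁ ∈ Set.Ioo s μ₀) (hxu₂ : xu₂ ∈ Set.Ioo s μ₀)
    (hz₁ : R β₁ xu₁ = 0) (hz₂ : R β₂ xu₂ = 0) :
    xu₂ < xu₁ ∧ xlow xu₁ < xlow xu₂ := by
  obtain ⟨hβ₁0, hβ₁1⟩ := hβ₁
  obtain ⟨hβ₂0, hβ₂1⟩ := hβ₂
  obtain ⟨hs₁, hu₁⟩ := hxu₁
  obtain ⟨hs₂, hu₂⟩ := hxu₂
  obtain ⟨hq0, hq1⟩ := hq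
  have h1q : (0:ℝ) < 1 + q := by linarith
  have hg_int : Integrable g := integrable_of_integral_eq_one hg_one
  have hGmono : Monotone G := by
    intro x y hxy
    rw [hG x, hG y]
    exact setIntegral_mono_set hg_int.integrableOn
      (Filter.Eventually.of_forall fun t => (hg_pos t).le)
      (HasSubset.Subset.eventuallyLE (Iic_subset_Iic.mpr hxy))
  have hxlow_anti : ∀ v₁ v₂, v₁ < v₂ → xlow v₂ < xlow v₁ := by
    intro v₁ v₂ h
    rw [hxlow, hxlow]
    have h' : 0 < (1 - q) / (1 + q) := div_pos (by linarith) h1q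
    nlinarith
  have hxlow_anti' : ∀ v₁ v₂, v₁ ≤ v₂ → xlow v₂ ≤ xlow v₁ := by
    intro v₁ v₂ h
    rcases eq_or_lt_of_le h with rfl | h
    · exact le_rfl
    · exact (hxlow_anti _ _ h).le
  have hxlow_lt : ∀ v, s < v → xlow v < v := by
    intro v hv
    have hrepr : xlow v = (2 * s - (1 - q) * v) / (1 + q) := by
      rw [hxlow]; field_simp
    rw [hrepr, div_lt_iff₀ h1q]; nlinarith
  -- main claim
  have hmain : xu₂ < xu₁ := by
    by_contra hle
    push_neg at hle  -- xu₁ ≤ xu₂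
    set a₁ := xlow xu₁ with ha₁
    set a₂ := xlow xu₂ with ha₂
    have ha₂₁ : a₂ ≤ a₁ := hxlow_anti' _ _ hle
    have ha₁u : a₁ < xu₁ := hxlow_lt _ hs₁
    have hint : ∀ (a b c : ℝ), IntervalIntegrable (fun x => G x - G c) volume a b :=
      fun a b c => (hGmono.intervalIntegrable).sub intervalIntegrable_const
    have hI₁ : (∫ x in a₁..xu₁, (G x - G a₁)) ≤ ∫ x in a₁..xu₁, (G x - G a₂) := by
      apply intervalIntegral.integral_mono_on ha₁u.le (hint _ _ _) (hint _ _ _)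
      intro x hx
      have := hGmono ha₂₁
      linarith
    have hsplit : (∫ x in a₂..xu₂, (G x - G a₂))
        = (∫ x in a₂..a₁, (G x - G a₂)) + (∫ x in a₁..xu₁, (G x - G a₂))
          + (∫ x in xu₁..xu₂, (G x - G a₂)) := by
      rw [intervalIntegral.integral_add_adjacent_intervals (hint _ _ _) (hint _ _ _),
        intervalIntegral.integral_add_adjacent_intervals (hint _ _ _) (hint _ _ _)]
    have hn1 : (0:ℝ) ≤ ∫ x in a₂..a₁, (G x - G a₂) := by
      apply intervalIntegral.integral_nonneg ha₂₁
      intro x hx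
      have := hGmono hx.1
      linarith
    have hn2 : (0:ℝ) ≤ ∫ x in xu₁..xu₂, (G x - G a₂) := by
      apply intervalIntegral.integral_nonneg hle
      intro x hx
      have : a₂ ≤ x := le_trans (le_trans ha₂₁ ha₁u.le) hx.1
      have := hGmono this
      linarith
    have hI₂ : (∫ x in a₁..xu₁, (G x - G a₁)) ≤ ∫ x in a₂..xu₂, (G x - G a₂) := by
      rw [hsplit]; linarith
    rw [hR] at hz₁ hz₂
    set I₁ := ∫ x in a₁..xu₁, (G x - G a₁)
    set I₂ := ∫ x in a₂..xu₂, (G x - G a₂)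
    have hd₂ : 0 < μ₀ - xu₂ := by linarith
    have hd₁₂ : μ₀ - xu₂ ≤ μ₀ - xu₁ := by linarith
    have e1 : β₁ * I₁ = (1 - β₁) * (μ₀ - xu₁) := by linarith
    have e2 : β₂ * I₂ = (1 - β₂) * (μ₀ - xu₂) := by linarith
    have key : β₁ * (1 - β₂) * (μ₀ - xu₂) < β₂ * (1 - β₁) * (μ₀ - xu₁) := by
      have h1β₁ : (0:ℝ) < 1 - β₁ := by linarith
      nlinarith [mul_le_mul_of_nonneg_left hd₁₂ (mul_pos hβ₂0 h1β₁).le,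
        mul_pos (sub_pos.mpr hββ) hd₂]
    have h4 : β₁ * β₂ * I₂ < β₁ * β₂ * I₁ := by nlinarith
    have h5 : I₂ < I₁ := lt_of_mul_lt_mul_left h4 (mul_pos hβ₁0 hβ₂0).le
    linarith
  refine ⟨hmain, hxlow_anti _ _ hmain⟩
end

section
/- Let g : ℝ → ℝ be a continuous, everywhere positive probability density with CDF G(x) = ∫_{−∞}^{x} g(t) dt, ∫_ℝ g = 1, mean μ₀ = ∫_ℝ x·g(x) dx, and μ₀ > 0. Let β ∈ (0,1) and r > r₀ > 0, and set s := r₀μ₀/r. For q ∈ (0,1) define x̲_q(v) = 2s/(1+q) − ((1−q)/(1+q))·v, let x̄(q) be the unique zero in (s, μ₀) of R_q(v) = β·∫_{x̲_q(v)}^{v} (G(x) − G(x̲_q(v))) dx − (1−β)·(μ₀ − v), and let x̲(q) = x̲_q(x̄(q)). Then for all q₁ < q₂ in (0,1): x̄(q₂) > x̄(q₁) and x̲(q₂) > x̲(q₁). -/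
open MeasureTheory Set

/-- Auxiliary: the integral of a monotone function on `[a,b]` is at least `(b-a) * G c`
for any `c ≤ a`. -/
lemma aux_int_ge_const (G : ℝ → ℝ) (hm : Monotone G) {c a b : ℝ}
    (hab : a ≤ b) (hca : c ≤ a) : (b - a) * G c ≤ ∫ x in a..b, G x := by
  have h := intervalIntegral.integral_mono_on (f := fun _ => G c) (g := G)
    (μ := volume) hab intervalIntegrable_const hm.intervalIntegrable
    (fun x hx => hm (hca.trans hx.1))
  simpa [intervalIntegral.integral_const, smul_eq_mul] using h

/-- Master inequality for `H a u = ∫ x in a..u, (G x - G a)` with monotone `G`: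
if `a' ≤ a ≤ u ≤ v` then `H a u + (G a - G a') * (v - a) ≤ H a' v`. -/
lemma aux_master (G : ℝ → ℝ) (hm : Monotone G) {a' a u v : ℝ}
    (h1 : a' ≤ a) (h2 : a ≤ u) (h3 : u ≤ v) :
    (∫ x in a..u, (G x - G a)) + (G a - G a') * (v - a)
      ≤ ∫ x in a'..v, (G x - G a') := by
  have hii : ∀ p q : ℝ, IntervalIntegrable G volume p q := fun p q => hm.intervalIntegrable
  have e1 : (∫ x in a..u, (G x - G a)) = (∫ x in a..u, G x) - (u - a) * G a := by
    rw [intervalIntegral.integral_sub (hii a u) intervalIntegrable_const,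
      intervalIntegral.integral_const, smul_eq_mul]
  have e2 : (∫ x in a'..v, (G x - G a')) = (∫ x in a'..v, G x) - (v - a') * G a' := by
    rw [intervalIntegral.integral_sub (hii a' v) intervalIntegrable_const,
      intervalIntegral.integral_const, smul_eq_mul]
  have hsplit1 : (∫ x in a'..a, G x) + (∫ x in a..v, G x) = ∫ x in a'..v, G x :=
    intervalIntegral.integral_add_adjacent_intervals (hii a' a) (hii a v)
  have hsplit2 : (∫ x in a..u, G x) + (∫ x in u..v, G x) = ∫ x in a..v, G x :=
    intervalIntegral.integral_add_adjacent_intervals (hii a u) (hii u v)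
  have b1 : (a - a') * G a' ≤ ∫ x in a'..a, G x := aux_int_ge_const G hm h1 le_rfl
  have b2 : (v - u) * G a ≤ ∫ x in u..v, G x := aux_int_ge_const G hm h3 h2
  rw [e1, e2]
  nlinarith [b1, b2, hsplit1, hsplit2]

/-- Part 2(b) of Proposition 4 (case `r > r₀`): both equilibrium disclosure thresholds
increase in the firm's information environment `q`, i.e. `∂x̄/∂q > 0` and `∂x̲/∂q > 0`. -/
theorem stmt_13 (g : ℝ → ℝ) (hg_cont : Continuous g) (hg_pos : ∀ x, 0 < g x)
    (hg_one : (∫ x, g x) = 1)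
    (hxg_int : Integrable (fun x => x * g x))
    (μ₀ : ℝ) (hμ₀ : μ₀ = ∫ x, x * g x) (hμ₀pos : 0 < μ₀)
    (G : ℝ → ℝ) (hG : ∀ x, G x = ∫ t in Iic x, g t)
    (β : ℝ) (hβ : β ∈ Set.Ioo (0 : ℝ) 1)
    (r r₀ : ℝ) (hr₀ : 0 < r₀) (hrr₀ : r₀ < r)
    (s : ℝ) (hs : s = r₀ * μ₀ / r)
    (xlow : ℝ → ℝ → ℝ)
    (hxlow : ∀ q v, xlow q v = 2 * s / (1 + q) - ((1 - q) / (1 + q)) * v)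
    (R : ℝ → ℝ → ℝ)
    (hR : ∀ q v, R q v
      = β * (∫ x in (xlow q v)..v, (G x - G (xlow q v))) - (1 - β) * (μ₀ - v))
    (q₁ q₂ : ℝ) (hq₁ : q₁ ∈ Set.Ioo (0 : ℝ) 1) (hq₂ : q₂ ∈ Set.Ioo (0 : ℝ) 1)
    (hqq : q₁ < q₂)
    (xu₁ xu₂ : ℝ) (hxu₁ : xu₁ ∈ Set.Ioo s μ₀) (hxu₂ : xu₂ ∈ Set.Ioo s μ₀)
    (hz₁ : R q₁ xu₁ = 0) (hz₂ : R q₂ xu₂ = 0) :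
    xu₁ < xu₂ ∧ xlow q₁ xu₁ < xlow q₂ xu₂ := by
  obtain ⟨hβ0, hβ1⟩ := hβ
  obtain ⟨hq₁0, hq₁1⟩ := hq₁
  obtain ⟨hq₂0, hq₂1⟩ := hq₂
  obtain ⟨hxu₁s, hxu₁μ⟩ := hxu₁
  obtain ⟨hxu₂s, hxu₂μ⟩ := hxu₂
  -- g is integrable
  have hgInt : Integrable g := by
    by_contra h
    rw [integral_undef h] at hg_one
    norm_num at hg_one
  -- G is monotone
  have hGdiff : ∀ a b : ℝ, G b - G a = ∫ x in a..b, g x := by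
    intro a b
    rw [hG, hG]
    exact intervalIntegral.integral_Iic_sub_Iic hgInt.integrableOn hgInt.integrableOn
  have hGmono : Monotone G := by
    intro a b hab
    have hpos : 0 ≤ ∫ x in a..b, g x :=
      intervalIntegral.integral_nonneg hab (fun x _ => (hg_pos x).le)
    have := hGdiff a b
    linarith
  -- G is strictly monotone
  have hGstrict : ∀ a b : ℝ, a < b → G a < G b := by
    intro a b hab
    have hpos : 0 < ∫ x in a..b, g x :=
      intervalIntegral.intervalIntegral_pos_of_pos
        (hg_cont.intervalIntegrable a b) hg_pos hab
    have := hGdiff a b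
    linarith
  -- a convenient closed form for xlow
  have hkey : ∀ q v : ℝ, 0 < q → q < 1 → xlow q v = v - 2 * (v - s) / (1 + q) := by
    intro q v hq0 hq1
    have h1q : (1 : ℝ) + q ≠ 0 := by intro hc; linarith [hc]
    rw [hxlow]
    field_simp
    ring
  have hxlow_lt : ∀ q v : ℝ, 0 < q → q < 1 → s < v → xlow q v < v := by
    intro q v hq0 hq1 hsv
    rw [hkey q v hq0 hq1]
    have : 0 < 2 * (v - s) / (1 + q) := div_pos (by linarith) (by linarith)
    linarith
  have hxlow_q : ∀ v : ℝ, s < v → xlow q₁ v < xlow q₂ v := by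
    intro v hsv
    rw [hkey q₁ v hq₁0 hq₁1, hkey q₂ v hq₂0 hq₂1]
    have hlt : 2 * (v - s) / (1 + q₂) < 2 * (v - s) / (1 + q₁) :=
      div_lt_div_of_pos_left (by linarith) (by linarith) (by linarith)
    linarith
  have hxlow_anti : ∀ q v w : ℝ, 0 < q → q < 1 → v ≤ w → xlow q w ≤ xlow q v := by
    intro q v w hq0 hq1 hvw
    rw [hxlow, hxlow]
    have h1q : (0:ℝ) < 1 + q := by linarith
    have hk : 0 ≤ (1 - q) / (1 + q) := div_nonneg (by linarith) h1q.le
    nlinarith [mul_le_mul_of_nonneg_left hvw hk]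
  have h12 : xlow q₁ xu₁ < xlow q₂ xu₁ := hxlow_q xu₁ hxu₁s
  have h2'lt : xlow q₂ xu₁ < xu₁ := hxlow_lt q₂ xu₁ hq₂0 hq₂1 hxu₁s
  have h1lt : xlow q₁ xu₁ < xu₁ := hxlow_lt q₁ xu₁ hq₁0 hq₁1 hxu₁s
  have h2lt : xlow q₂ xu₂ < xu₂ := hxlow_lt q₂ xu₂ hq₂0 hq₂1 hxu₂s
  have e1 := hR q₂ xu₁
  have e2 := hR q₁ xu₁
  have e3 := hR q₂ xu₂
  have z1 : β * (∫ x in (xlow q₁ xu₁)..xu₁, (G x - G (xlow q₁ xu₁)))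
      - (1 - β) * (μ₀ - xu₁) = 0 := by rw [← e2]; exact hz₁
  have z2 : β * (∫ x in (xlow q₂ xu₂)..xu₂, (G x - G (xlow q₂ xu₂)))
      - (1 - β) * (μ₀ - xu₂) = 0 := by rw [← e3]; exact hz₂
  -- Step A : R q₂ xu₁ < 0
  have hstrict : (∫ x in (xlow q₂ xu₁)..xu₁, (G x - G (xlow q₂ xu₁)))
      < ∫ x in (xlow q₁ xu₁)..xu₁, (G x - G (xlow q₁ xu₁)) := by
    have hm := aux_master G hGmono h12.le h2'lt.le (le_refl xu₁)
    have hGlt : G (xlow q₁ xu₁) < G (xlow q₂ xu₁) := hGstrict _ _ h12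
    nlinarith [mul_pos (sub_pos.2 hGlt) (sub_pos.2 h2'lt)]
  have hA : β * (∫ x in (xlow q₂ xu₁)..xu₁, (G x - G (xlow q₂ xu₁)))
      - (1 - β) * (μ₀ - xu₁) < 0 := by
    linarith [mul_lt_mul_of_pos_left hstrict hβ0]
  -- Step B : xu₁ < xu₂
  have hB : xu₁ < xu₂ := by
    by_contra h
    push_neg at h
    have ha2'2 : xlow q₂ xu₁ ≤ xlow q₂ xu₂ := hxlow_anti q₂ xu₂ xu₁ hq₂0 hq₂1 h
    have hm := aux_master G hGmono ha2'2 h2lt.le h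
    have hGle : G (xlow q₂ xu₁) ≤ G (xlow q₂ xu₂) := hGmono ha2'2
    have hHle : (∫ x in (xlow q₂ xu₂)..xu₂, (G x - G (xlow q₂ xu₂)))
        ≤ ∫ x in (xlow q₂ xu₁)..xu₁, (G x - G (xlow q₂ xu₁)) := by
      linarith [mul_nonneg (sub_nonneg.2 hGle)
        (by linarith : (0:ℝ) ≤ xu₁ - xlow q₂ xu₂)]
    linarith [mul_le_mul_of_nonneg_left hHle hβ0.le,
      mul_le_mul_of_nonneg_left (by linarith : μ₀ - xu₁ ≤ μ₀ - xu₂)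
        (by linarith : (0:ℝ) ≤ 1 - β)]
  refine ⟨hB, ?_⟩
  -- Step C : xlow q₁ xu₁ < xlow q₂ xu₂
  by_contra h
  push_neg at h
  have hm := aux_master G hGmono h h1lt.le hB.le
  have hGle : G (xlow q₂ xu₂) ≤ G (xlow q₁ xu₁) := hGmono h
  have hHle : (∫ x in (xlow q₁ xu₁)..xu₁, (G x - G (xlow q₁ xu₁)))
      ≤ ∫ x in (xlow q₂ xu₂)..xu₂, (G x - G (xlow q₂ xu₂)) := by
    linarith [mul_nonneg (sub_nonneg.2 hGle)
      (by linarith : (0:ℝ) ≤ xu₂ - xlow q₁ xu₁)]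
  linarith [mul_le_mul_of_nonneg_left hHle hβ0.le,
    mul_lt_mul_of_pos_left (by linarith : μ₀ - xu₂ < μ₀ - xu₁)
      (by linarith : (0:ℝ) < 1 - β)]
end

section
/- Let g : ℝ → ℝ be a continuous, everywhere positive probability density with CDF G(x) = ∫_{−∞}^{x} g(t) dt, ∫_ℝ g = 1, mean μ₀ = ∫_ℝ x·g(x) dx, and μ₀ > 0. Let β ∈ (0,1), p ∈ (0,1), and s ∈ ℝ, and assume (p/(1−p))·∫_{−∞}^{s} G(x) dx + s − μ₀ > 0 (the improper integral being finite because g has a finite mean). Define x̄_p(u) = (2s − (1−p)·u)/(1+p) and H(u) = (β/(1−β))·∫_{u}^{x̄_p(u)} (G(x) − G(x̄_p(u))) dx + (p/(1−p))·∫_{−∞}^{u} G(x) dx − (μ₀ − u). Then H is strictly increasing on (−∞, s], H(s) > 0, H(u) → −∞ as u → −∞, and H has a unique zero x̲_p in (−∞, s). -/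
open MeasureTheory Set Filter

/-- Extension with the firm's endogenous response (Proposition 6, case `r < r̄`): the
equilibrium-determining function `H` is strictly increasing on `(−∞, s]`, positive at `s`,
tends to `−∞` at `−∞`, and has a unique zero `x̲_p` in `(−∞, s)`. -/
theorem stmt_14 (g : ℝ → ℝ) (hg_cont : Continuous g) (hg_pos : ∀ x, 0 < g x)
    (hg_one : (∫ x, g x) = 1)
    (hxg_int : Integrable (fun x => x * g x))
    (μ₀ : ℝ) (hμ₀ : μ₀ = ∫ x, x * g x) (hμ₀pos : 0 < μ₀)
    (G : ℝ → ℝ) (hG : ∀ x, G x = ∫ t in Iic x, g t)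
    (hGint : ∀ a : ℝ, IntegrableOn G (Set.Iic a))
    (β : ℝ) (hβ : β ∈ Set.Ioo (0 : ℝ) 1)
    (p : ℝ) (hp : p ∈ Set.Ioo (0 : ℝ) 1)
    (s : ℝ)
    (hV : p / (1 - p) * (∫ x in Set.Iic s, G x) + s - μ₀ > 0)
    (xbarp : ℝ → ℝ) (hxbarp : ∀ u, xbarp u = (2 * s - (1 - p) * u) / (1 + p))
    (H : ℝ → ℝ)
    (hH : ∀ u, H u = β / (1 - β) * (∫ x in u..(xbarp u), (G x - G (xbarp u)))
      + p / (1 - p) * (∫ x in Set.Iic u, G x) - (μ₀ - u)) :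
    StrictMonoOn H (Set.Iic s) ∧ 0 < H s ∧ Tendsto H atBot atBot ∧
      ∃! u, u ∈ Set.Iio s ∧ H u = 0 := by
  obtain ⟨hβ0, hβ1⟩ := hβ
  obtain ⟨hp0, hp1⟩ := hp
  have h1p : (0:ℝ) < 1 + p := by linarith
  have h1p' : (1:ℝ) + p ≠ 0 := ne_of_gt h1p
  set c₁ : ℝ := β / (1 - β) with hc₁
  set c₂ : ℝ := p / (1 - p) with hc₂
  have hc₁pos : 0 < c₁ := div_pos hβ0 (by linarith)
  have hc₂pos : 0 < c₂ := div_pos hp0 (by linarith)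
  -- g is integrable
  have hg_int : Integrable g := by
    by_contra h
    rw [integral_undef h] at hg_one
    norm_num at hg_one
  -- G has derivative g
  have hGfun : G = fun x => (∫ t in Iic (0:ℝ), g t) + ∫ t in (0:ℝ)..x, g t := by
    funext x
    rw [hG]
    have := intervalIntegral.integral_Iic_sub_Iic (μ := volume) (f := g) (a := (0:ℝ)) (b := x)
      hg_int.integrableOn hg_int.integrableOn
    linarith [this]
  have hG' : ∀ y, HasDerivAt G (g y) y := by
    intro y
    rw [hGfun]
    exact ((hg_cont.integral_hasStrictDerivAt 0 y).hasDerivAt).const_add _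
  have hG_cont : Continuous G := by
    have : Differentiable ℝ G := fun y => (hG' y).differentiableAt
    exact this.continuous
  have hG_mono : Monotone G := by
    have : StrictMono G := by
      apply strictMono_of_deriv_pos
      intro y
      rw [(hG' y).deriv]
      exact hg_pos y
    exact this.monotone
  have hG_nonneg : ∀ x, 0 ≤ G x := by
    intro x
    rw [hG]
    exact setIntegral_nonneg measurableSet_Iic fun t _ => (hg_pos t).le
  -- antiderivative of G
  set Φ : ℝ → ℝ := fun y => ∫ x in (0:ℝ)..y, G x with hΦdef
  have hΦ : ∀ y, HasDerivAt Φ (G y) y := fun y =>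
    (hG_cont.integral_hasStrictDerivAt 0 y).hasDerivAt
  have hΦint : ∀ a b : ℝ, (∫ x in a..b, G x) = Φ b - Φ a := by
    intro a b
    rw [hΦdef]
    exact (intervalIntegral.integral_interval_sub_left
      (hG_cont.intervalIntegrable 0 b) (hG_cont.intervalIntegrable 0 a)).symm
  set Ks : ℝ := ∫ x in Set.Iic s, G x with hKs
  have hIic_rep : ∀ u : ℝ, (∫ x in Set.Iic u, G x) = Ks + (Φ u - Φ s) := by
    intro u
    have := intervalIntegral.integral_Iic_sub_Iic (μ := volume) (f := G) (a := s) (b := u)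
      (hGint s) (hGint u)
    rw [hΦint s u] at this
    linarith [this]
  -- slope of xbarp
  set m : ℝ := -(1 - p) / (1 + p) with hm
  have hm_neg : m < 0 := div_neg_of_neg_of_pos (by linarith) h1p
  have hxb' : ∀ u, HasDerivAt xbarp m u := by
    intro u
    have hfun : xbarp = fun u => 2 * s / (1 + p) + m * u := by
      funext v
      rw [hxbarp, hm]
      field_simp
      ring
    rw [hfun]
    simpa using ((hasDerivAt_id u).const_mul m).const_add (2 * s / (1 + p))
  have hxb_sub : ∀ u, xbarp u - u = 2 * (s - u) / (1 + p) := by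
    intro u
    rw [hxbarp]
    field_simp
    ring
  have hxb_ge : ∀ u, u ≤ s → u ≤ xbarp u := by
    intro u hu
    have h2 : 0 ≤ 2 * (s - u) / (1 + p) := div_nonneg (by linarith) h1p.le
    nlinarith [hxb_sub u]
  -- closed-form of H
  have hHfun : H = fun u =>
      c₁ * (Φ (xbarp u) - Φ u - (xbarp u - u) * G (xbarp u))
        + c₂ * (Ks + (Φ u - Φ s)) + (u - μ₀) := by
    funext u
    rw [hH, hIic_rep u]
    have hsplit : (∫ x in u..(xbarp u), (G x - G (xbarp u)))
        = (∫ x in u..(xbarp u), G x) - (xbarp u - u) * G (xbarp u) := by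
      rw [intervalIntegral.integral_sub (hG_cont.intervalIntegrable _ _)
        (intervalIntegrable_const)]
      rw [intervalIntegral.integral_const, smul_eq_mul]
    rw [hsplit, hΦint u (xbarp u)]
    ring
  -- derivative of H
  set D : ℝ → ℝ := fun u =>
    c₁ * (G (xbarp u) * m - G u - ((m - 1) * G (xbarp u) + (xbarp u - u) * (g (xbarp u) * m)))
      + c₂ * G u + 1 with hD
  have hH' : ∀ u, HasDerivAt H (D u) u := by
    intro u
    rw [hHfun]
    have h1 : HasDerivAt (fun u => Φ (xbarp u)) (G (xbarp u) * m) u :=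
      (hΦ (xbarp u)).comp u (hxb' u)
    have h2 : HasDerivAt Φ (G u) u := hΦ u
    have h3 : HasDerivAt (fun u => xbarp u - u) (m - 1) u :=
      (hxb' u).sub (hasDerivAt_id u)
    have h4 : HasDerivAt (fun u => G (xbarp u)) (g (xbarp u) * m) u :=
      (hG' (xbarp u)).comp u (hxb' u)
    have h5 : HasDerivAt (fun u => (xbarp u - u) * G (xbarp u))
        ((m - 1) * G (xbarp u) + (xbarp u - u) * (g (xbarp u) * m)) u := h3.mul h4
    have h6 : HasDerivAt (fun u => Φ (xbarp u) - Φ u - (xbarp u - u) * G (xbarp u))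
        (G (xbarp u) * m - G u - ((m - 1) * G (xbarp u) + (xbarp u - u) * (g (xbarp u) * m)))
        u := (h1.sub h2).sub h5
    have h7 : HasDerivAt (fun u => Ks + (Φ u - Φ s)) (G u) u :=
      (h2.sub_const (Φ s)).const_add Ks
    have h8 : HasDerivAt (fun u : ℝ => u - μ₀) 1 u := (hasDerivAt_id u).sub_const μ₀
    exact ((h6.const_mul c₁).add (h7.const_mul c₂)).add h8
  have hD_pos : ∀ u, u ≤ s → 0 < D u := by
    intro u hu
    have hGm : G u ≤ G (xbarp u) := hG_mono (hxb_ge u hu)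
    have hxu : 0 ≤ xbarp u - u := by linarith [hxb_ge u hu]
    have hgpos : 0 < g (xbarp u) := hg_pos (xbarp u)
    have hkey : 0 ≤ G (xbarp u) * m - G u - ((m - 1) * G (xbarp u)
        + (xbarp u - u) * (g (xbarp u) * m)) := by
      have : G (xbarp u) * m - G u - ((m - 1) * G (xbarp u)
          + (xbarp u - u) * (g (xbarp u) * m))
          = (G (xbarp u) - G u) + (xbarp u - u) * g (xbarp u) * (-m) := by ring
      rw [this]
      have h1 : 0 ≤ (xbarp u - u) * g (xbarp u) * (-m) :=
        mul_nonneg (mul_nonneg hxu hgpos.le) (by linarith)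
      linarith
    have h2 : 0 ≤ c₂ * G u := mul_nonneg hc₂pos.le (hG_nonneg u)
    have h3 : 0 ≤ c₁ * (G (xbarp u) * m - G u - ((m - 1) * G (xbarp u)
        + (xbarp u - u) * (g (xbarp u) * m))) := mul_nonneg hc₁pos.le hkey
    rw [hD]
    dsimp only
    linarith
  have hH_cont : Continuous H := by
    have : Differentiable ℝ H := fun u => (hH' u).differentiableAt
    exact this.continuous
  -- strict monotonicity
  have hmono : StrictMonoOn H (Set.Iic s) := by
    apply strictMonoOn_of_deriv_pos (convex_Iic s) hH_cont.continuousOn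
    intro x hx
    rw [interior_Iic] at hx
    rw [(hH' x).deriv]
    exact hD_pos x (le_of_lt hx)
  -- positivity at s
  have hxbs : xbarp s = s := by
    rw [hxbarp]
    field_simp
    ring
  have hHs : 0 < H s := by
    rw [hH s, hxbs]
    simp only [intervalIntegral.integral_same]
    rw [← hKs]
    linarith [hV]
  -- tendsto atBot
  have hbound : ∀ u, u ≤ s → H u ≤ u + (c₂ * Ks - μ₀) := by
    intro u hu
    have hJ : Φ (xbarp u) - Φ u ≤ (xbarp u - u) * G (xbarp u) := by
      rw [← hΦint u (xbarp u)]
      have hle : u ≤ xbarp u := hxb_ge u hu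
      calc (∫ x in u..(xbarp u), G x)
          ≤ ∫ x in u..(xbarp u), G (xbarp u) := by
            apply intervalIntegral.integral_mono_on hle
              (hG_cont.intervalIntegrable _ _) intervalIntegrable_const
            intro x hx
            exact hG_mono hx.2
        _ = (xbarp u - u) * G (xbarp u) := by
            rw [intervalIntegral.integral_const, smul_eq_mul]
    have hK : Φ u - Φ s ≤ 0 := by
      rw [← hΦint s u]
      rw [intervalIntegral.integral_of_ge hu]
      simp only [neg_nonpos]
      exact setIntegral_nonneg measurableSet_Ioc fun t _ => hG_nonneg t
    have h1 : c₁ * (Φ (xbarp u) - Φ u - (xbarp u - u) * G (xbarp u)) ≤ 0 :=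
      mul_nonpos_of_nonneg_of_nonpos hc₁pos.le (by linarith)
    have h2 : c₂ * (Ks + (Φ u - Φ s)) ≤ c₂ * Ks := by
      apply mul_le_mul_of_nonneg_left _ hc₂pos.le
      linarith
    rw [hHfun]
    dsimp only
    linarith
  have htendsto : Tendsto H atBot atBot := by
    apply tendsto_atBot_mono' atBot
      (f₁ := fun u => u + (c₂ * Ks - μ₀))
    · filter_upwards [eventually_le_atBot s] with u hu
      exact hbound u hu
    · exact tendsto_atBot_add_const_right _ _ tendsto_id
  refine ⟨hmono, hHs, htendsto, ?_⟩
  -- existence of a zero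
  obtain ⟨u₀, hu₀⟩ : ∃ u₀, H u₀ < 0 ∧ u₀ ≤ s := by
    have h1 : ∀ᶠ u in atBot, H u < 0 := htendsto.eventually (eventually_lt_atBot 0)
    have h2 : ∀ᶠ u in atBot, u ≤ s := eventually_le_atBot s
    obtain ⟨u₀, hu₀⟩ := (h1.and h2).exists
    exact ⟨u₀, hu₀⟩
  obtain ⟨c, hc_mem, hc_zero⟩ : ∃ c ∈ Icc u₀ s, H c = 0 := by
    have : (0:ℝ) ∈ Icc (H u₀) (H s) := ⟨hu₀.1.le, hHs.le⟩
    obtain ⟨c, hc, hc0⟩ := intermediate_value_Icc hu₀.2 hH_cont.continuousOn this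
    exact ⟨c, hc, hc0⟩
  have hc_lt : c < s := by
    rcases lt_or_eq_of_le hc_mem.2 with h | h
    · exact h
    · exfalso; rw [h] at hc_zero; linarith
  refine ⟨c, ⟨hc_lt, hc_zero⟩, ?_⟩
  rintro y ⟨hy_mem, hy_zero⟩
  exact hmono.injOn (mem_Iic.mpr (le_of_lt (mem_Iio.mp hy_mem)))
    (mem_Iic.mpr (le_of_lt hc_lt)) (by rw [hy_zero, hc_zero])
end

section
/- Let g : ℝ → ℝ be a continuous, everywhere positive probability density with CDF G(x) = ∫_{−∞}^{x} g(t) dt, ∫_ℝ g = 1, mean μ₀ = ∫_ℝ x·g(x) dx, and μ₀ > 0. Let β ∈ (0,1), p ∈ (0,1), and s ∈ ℝ. Define T(v) = (β/((1−β)(1−p)))·∫_{2s−v}^{v} (G(x) − G(2s−v)) dx + (p/(1−p))·∫_{−∞}^{v} G(x) dx − (μ₀ − v), where the improper integral is finite because g has a finite mean. Then T is strictly increasing on [s, +∞), T(v) → +∞ as v → +∞, and T has a zero in (s, +∞) if and only if T(s) = (p/(1−p))·∫_{−∞}^{s} G(x) dx + s − μ₀ < 0; when it exists, this zero x̄_p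 is unique. -/
open MeasureTheory Set Filter

/-- Extension with the firm's endogenous response (Proposition 6, case `r > r̄`): the
equilibrium-determining function `T` is strictly increasing on `[s, +∞)`, tends to `+∞`
at `+∞`, has a zero in `(s, +∞)` iff `T(s) = (p/(1−p))·∫_{−∞}^{s} G + s − μ₀ < 0`, and
such a zero is unique when it exists. -/
theorem stmt_15 (g : ℝ → ℝ) (hg_cont : Continuous g) (hg_pos : ∀ x, 0 < g x)
    (hg_one : (∫ x, g x) = 1)
    (hxg_int : Integrable (fun x => x * g x))
    (μ₀ : ℝ) (hμ₀ : μ₀ = ∫ x, x * g x) (hμ₀pos : 0 < μ₀)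
    (G : ℝ → ℝ) (hG : ∀ x, G x = ∫ t in Iic x, g t)
    (hGint : ∀ a : ℝ, IntegrableOn G (Set.Iic a))
    (β : ℝ) (hβ : β ∈ Set.Ioo (0 : ℝ) 1)
    (p : ℝ) (hp : p ∈ Set.Ioo (0 : ℝ) 1)
    (s : ℝ)
    (T : ℝ → ℝ)
    (hT : ∀ v, T v = β / ((1 - β) * (1 - p)) * (∫ x in (2 * s - v)..v, (G x - G (2 * s - v)))
      + p / (1 - p) * (∫ x in Set.Iic v, G x) - (μ₀ - v)) :
    StrictMonoOn T (Set.Ici s) ∧ Tendsto T atTop atTop ∧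
      ((∃ v ∈ Set.Ioi s, T v = 0) ↔
        p / (1 - p) * (∫ x in Set.Iic s, G x) + s - μ₀ < 0) ∧
      ∀ v₁ ∈ Set.Ioi s, ∀ v₂ ∈ Set.Ioi s, T v₁ = 0 → T v₂ = 0 → v₁ = v₂ := by
  obtain ⟨hβ0, hβ1⟩ := hβ
  obtain ⟨hp0, hp1⟩ := hp
  have hg_int : Integrable g := by
    by_contra h
    rw [integral_undef h] at hg_one; norm_num at hg_one
  have hg_nonneg : ∀ x, 0 ≤ g x := fun x => (hg_pos x).le
  -- Basic facts about G
  have hGdiff : ∀ a b : ℝ, G b - G a = ∫ t in a..b, g t := by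
    intro a b
    rw [hG, hG]
    exact intervalIntegral.integral_Iic_sub_Iic hg_int.integrableOn hg_int.integrableOn
  have hGmono : Monotone G := by
    intro a b hab
    have h1 := hGdiff a b
    have h2 : 0 ≤ ∫ t in a..b, g t :=
      intervalIntegral.integral_nonneg hab fun x _ => hg_nonneg x
    linarith
  have hGnonneg : ∀ x, 0 ≤ G x := by
    intro x
    rw [hG]
    exact setIntegral_nonneg measurableSet_Iic fun t _ => hg_nonneg t
  have hGposdiff : ∀ a b : ℝ, a < b → G a < G b := by
    intro a b hab
    have h1 := hGdiff a b
    have h2 : 0 < ∫ t in a..b, g t :=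
      intervalIntegral.intervalIntegral_pos_of_pos_on hg_int.intervalIntegrable
        (fun x _ => hg_pos x) hab
    linarith
  have hGpos : ∀ x, 0 < G x := by
    intro x
    have := hGposdiff (x - 1) x (by linarith)
    have := hGnonneg (x - 1)
    linarith
  have hG_cont : Continuous G := by
    have h1 : ∀ x, G x = G 0 + ∫ t in (0:ℝ)..x, g t := by
      intro x; have := hGdiff 0 x; linarith
    have h2 : Continuous fun x => ∫ t in (0:ℝ)..x, g t :=
      intervalIntegral.continuous_primitive (fun a b => hg_int.intervalIntegrable) 0
    have : G = fun x => G 0 + ∫ t in (0:ℝ)..x, g t := funext h1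
    rw [this]
    exact continuous_const.add h2
  -- Constants
  set c1 : ℝ := β / ((1 - β) * (1 - p)) with hc1def
  set c2 : ℝ := p / (1 - p) with hc2def
  have hc1 : 0 < c1 := div_pos hβ0 (mul_pos (by linarith) (by linarith))
  have hc2 : 0 < c2 := div_pos hp0 (by linarith)
  -- J and I
  set J : ℝ → ℝ := fun v => ∫ x in Iic v, G x with hJdef
  set I : ℝ → ℝ := fun v => ∫ x in (2 * s - v)..v, (G x - G (2 * s - v)) with hIdef
  have hJdiff : ∀ a b : ℝ, J b - J a = ∫ x in a..b, G x := fun a b =>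
    intervalIntegral.integral_Iic_sub_Iic (hGint a) (hGint b)
  have hJnonneg : ∀ v, 0 ≤ J v := fun v =>
    setIntegral_nonneg measurableSet_Iic fun x _ => hGnonneg x
  have hJcont : Continuous J := by
    have h2 : Continuous fun x => ∫ t in (0:ℝ)..x, G t :=
      intervalIntegral.continuous_primitive (fun a b => hG_cont.intervalIntegrable a b) 0
    have h1 : J = fun v => J 0 + ∫ t in (0:ℝ)..v, G t := by
      funext v; have := hJdiff 0 v; linarith
    rw [h1]
    exact continuous_const.add h2
  have hTdef : ∀ v, T v = c1 * I v + c2 * J v - (μ₀ - v) := hT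
  have hIint : ∀ a b x y : ℝ, IntervalIntegrable (fun t => G t - G x) volume a b :=
    fun a b x y => (hG_cont.sub continuous_const).intervalIntegrable a b
  -- I is nonnegative on [s, ∞)
  have hInonneg : ∀ v, s ≤ v → 0 ≤ I v := by
    intro v hv
    apply intervalIntegral.integral_nonneg (by linarith)
    intro x hx
    have : G (2 * s - v) ≤ G x := hGmono hx.1
    linarith
  -- I is monotone on [s, ∞)
  have hImono : ∀ v₁ v₂, s ≤ v₁ → v₁ ≤ v₂ → I v₁ ≤ I v₂ := by
    intro v₁ v₂ hs1 h12
    set a₁ := 2 * s - v₁ with ha1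
    set a₂ := 2 * s - v₂ with ha2
    have ha21 : a₂ ≤ a₁ := by simp [ha1, ha2]; linarith
    have ha1v1 : a₁ ≤ v₁ := by simp [ha1]; linarith
    have hsplit1 : (∫ x in a₂..a₁, (G x - G a₂)) + (∫ x in a₁..v₂, (G x - G a₂))
        = ∫ x in a₂..v₂, (G x - G a₂) :=
      intervalIntegral.integral_add_adjacent_intervals (hIint _ _ _ 0) (hIint _ _ _ 0)
    have hsplit2 : (∫ x in a₁..v₁, (G x - G a₂)) + (∫ x in v₁..v₂, (G x - G a₂))
        = ∫ x in a₁..v₂, (G x - G a₂) :=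
      intervalIntegral.integral_add_adjacent_intervals (hIint _ _ _ 0) (hIint _ _ _ 0)
    have hpos1 : 0 ≤ ∫ x in a₂..a₁, (G x - G a₂) := by
      apply intervalIntegral.integral_nonneg ha21
      intro x hx
      have := hGmono hx.1
      linarith
    have hpos2 : 0 ≤ ∫ x in v₁..v₂, (G x - G a₂) := by
      apply intervalIntegral.integral_nonneg h12
      intro x hx
      have : G a₂ ≤ G x := hGmono (by simp [ha2] at *; linarith [hx.1])
      linarith
    have hmid : (∫ x in a₁..v₁, (G x - G a₁)) ≤ ∫ x in a₁..v₁, (G x - G a₂) := by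
      apply intervalIntegral.integral_mono_on ha1v1 (hIint _ _ _ 0) (hIint _ _ _ 0)
      intro x _
      have : G a₂ ≤ G a₁ := hGmono ha21
      linarith
    have hI1 : I v₁ = ∫ x in a₁..v₁, (G x - G a₁) := rfl
    have hI2 : I v₂ = ∫ x in a₂..v₂, (G x - G a₂) := rfl
    rw [hI1, hI2, ← hsplit1, ← hsplit2]
    linarith
  -- Strict monotonicity of T on [s, ∞)
  have hTstrict : StrictMonoOn T (Set.Ici s) := by
    intro v₁ hv₁ v₂ hv₂ h12
    have hI := hImono v₁ v₂ hv₁ h12.le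
    have hJ : J v₁ < J v₂ := by
      have h1 := hJdiff v₁ v₂
      have h2 : 0 < ∫ x in v₁..v₂, G x :=
        intervalIntegral.intervalIntegral_pos_of_pos_on (hG_cont.intervalIntegrable _ _)
          (fun x _ => hGpos x) h12
      linarith
    rw [hTdef, hTdef]
    nlinarith [mul_le_mul_of_nonneg_left hI hc1.le, mul_lt_mul_of_pos_left hJ hc2]
  -- Tendsto atTop
  have hTop : Tendsto T atTop atTop := by
    apply tendsto_atTop_mono' atTop ?_ (tendsto_atTop_add_const_right atTop (-μ₀) tendsto_id)
    filter_upwards [eventually_ge_atTop s] with v hv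
    have h1 := hInonneg v hv
    have h2 := hJnonneg v
    rw [hTdef]
    simp only [id]
    nlinarith [mul_nonneg hc1.le h1, mul_nonneg hc2.le h2]
  -- T s
  have hTs : T s = c2 * J s + s - μ₀ := by
    rw [hTdef]
    have : I s = 0 := by
      have h : 2 * s - s = s := by ring
      simp only [hIdef, h, intervalIntegral.integral_same]
    rw [this]
    ring
  -- Continuity of T
  have hTcont : Continuous T := by
    have hIeq : I = fun v => (∫ t in (0:ℝ)..v, G t) - (∫ t in (0:ℝ)..(2 * s - v), G t)
        - (v - (2 * s - v)) * G (2 * s - v) := by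
      funext v
      have h1 : (∫ x in (2 * s - v)..v, (G x - G (2 * s - v)))
          = (∫ x in (2 * s - v)..v, G x) - (∫ x in (2 * s - v)..v, (fun _ => G (2 * s - v)) x) :=
        intervalIntegral.integral_sub (hG_cont.intervalIntegrable _ _)
          (intervalIntegrable_const)
      have h2 : (∫ x in (2 * s - v)..v, (fun _ => G (2 * s - v)) x)
          = (v - (2 * s - v)) * G (2 * s - v) := by
        simp [intervalIntegral.integral_const, smul_eq_mul]
      have h3 : (∫ x in (2 * s - v)..v, G x)
          = (∫ t in (0:ℝ)..v, G t) - (∫ t in (0:ℝ)..(2 * s - v), G t) := by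
        rw [← intervalIntegral.integral_add_adjacent_intervals
          (hG_cont.intervalIntegrable 0 (2 * s - v)) (hG_cont.intervalIntegrable (2 * s - v) v)]
        ring
      show (∫ x in (2 * s - v)..v, (G x - G (2 * s - v))) = _
      rw [h1, h2, h3]
    have hP : Continuous fun v : ℝ => ∫ t in (0:ℝ)..v, G t :=
      intervalIntegral.continuous_primitive (fun a b => hG_cont.intervalIntegrable a b) 0
    have hIcont : Continuous I := by
      rw [hIeq]
      have hlin : Continuous fun v : ℝ => 2 * s - v := continuous_const.sub continuous_id
      exact (hP.sub (hP.comp hlin)).sub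
        ((continuous_id.sub hlin).mul (hG_cont.comp hlin))
    have : T = fun v => c1 * I v + c2 * J v - (μ₀ - v) := funext hTdef
    rw [this]
    exact ((continuous_const.mul hIcont).add (continuous_const.mul hJcont)).sub
      (continuous_const.sub continuous_id)
  refine ⟨hTstrict, hTop, ?_, ?_⟩
  · constructor
    · rintro ⟨v, hv, hTv⟩
      have : T s < T v := hTstrict (Set.mem_Ici.mpr (le_refl s)) (Set.mem_Ici.mpr (le_of_lt (Set.mem_Ioi.mp hv))) (Set.mem_Ioi.mp hv)
      rw [hTv, hTs] at this
      linarith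
    · intro hlt
      have hTsneg : T s < 0 := by rw [hTs]; linarith
      obtain ⟨b, hb1, hb2⟩ := ((hTop.eventually_gt_atTop 0).and (eventually_ge_atTop s)).exists
      have hsub : Set.Icc (T s) (T b) ⊆ T '' Set.Icc s b :=
        intermediate_value_Icc hb2 hTcont.continuousOn
      obtain ⟨v, hv, hTv⟩ := hsub ⟨hTsneg.le, hb1.le⟩
      refine ⟨v, ?_, hTv⟩
      rcases eq_or_lt_of_le hv.1 with h | h
      · exfalso; rw [← h] at hTv; linarith
      · exact h
  · intro v₁ hv₁ v₂ hv₂ h1 h2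
    exact hTstrict.injOn (Set.mem_Ici.mpr (le_of_lt (Set.mem_Ioi.mp hv₁))) (Set.mem_Ici.mpr (le_of_lt (Set.mem_Ioi.mp hv₂))) (h1.trans h2.symm)
end

section
/- Let g : ℝ → ℝ be a continuous, everywhere positive probability density with CDF G(x) = ∫_{−∞}^{x} g(t) dt, ∫_ℝ g = 1, mean μ₀ = ∫_ℝ x·g(x) dx, and μ₀ > 0. Let p ∈ (0,1) and r₀ > 0. For r > 0 define V(r) = (p/(1−p))·∫_{−∞}^{r₀μ₀/r} G(x) dx − (μ₀ − r₀μ₀/r), where the improper integral is finite because g has a finite mean. Then: (i) V is strictly decreasing on (0, +∞); (ii) V(r₀) > 0; (iii) V(r) → (p/(1−p))·∫_{−∞}^{0} G(x) dx − μ₀ as r → +∞; and (iv) if (p/(1−p))·∫_{−∞}^{0} G(x) dx < μ₀, then there exists a unique r̄ > r₀ with V(r̄) = 0, and V(r) > 0 for r < r̄ while V(r) < 0 for r > r̄. -/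
open MeasureTheory Set Filter

/-- Determination of the cutoff `r̄` in the extension with the firm's endogenous response
(Proposition 6, equation (barr)): `V` is strictly decreasing on `(0, ∞)`, positive at `r₀`,
tends to `(p/(1−p))·∫_{−∞}^{0} G − μ₀` as `r → ∞`, and when that limit is negative there is
a unique cutoff `r̄ > r₀` with `V(r̄) = 0`, `V > 0` below it and `V < 0` above it. -/
theorem stmt_16 (g : ℝ → ℝ) (hg_cont : Continuous g) (hg_pos : ∀ x, 0 < g x)
    (hg_one : (∫ x, g x) = 1)
    (hxg_int : Integrable (fun x => x * g x))
    (μ₀ : ℝ) (hμ₀ : μ₀ = ∫ x, x * g x) (hμ₀pos : 0 < μ₀)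
    (G : ℝ → ℝ) (hG : ∀ x, G x = ∫ t in Iic x, g t)
    (hGint : ∀ a : ℝ, IntegrableOn G (Set.Iic a))
    (p : ℝ) (hp : p ∈ Set.Ioo (0 : ℝ) 1)
    (r₀ : ℝ) (hr₀ : 0 < r₀)
    (V : ℝ → ℝ)
    (hV : ∀ r, V r = p / (1 - p) * (∫ x in Set.Iic (r₀ * μ₀ / r), G x)
      - (μ₀ - r₀ * μ₀ / r)) :
    StrictAntiOn V (Set.Ioi (0 : ℝ)) ∧ 0 < V r₀ ∧
      Tendsto V atTop (nhds (p / (1 - p) * (∫ x in Set.Iic (0 : ℝ), G x) - μ₀)) ∧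
      (p / (1 - p) * (∫ x in Set.Iic (0 : ℝ), G x) < μ₀ →
        ∃ rbar, (r₀ < rbar ∧ V rbar = 0) ∧
          (∀ r, r₀ < r → V r = 0 → r = rbar) ∧
          (∀ r, 0 < r → r < rbar → 0 < V r) ∧
          (∀ r, rbar < r → V r < 0)) := by
  obtain ⟨hp0, hp1⟩ := hp
  have hq : 0 < p / (1 - p) := div_pos hp0 (by linarith)
  have hgInt : Integrable g := by
    by_contra h
    rw [integral_undef h] at hg_one; norm_num at hg_one
  have hGnn : ∀ x, 0 ≤ G x := fun x => by
    rw [hG]; exact setIntegral_nonneg measurableSet_Iic (fun t _ => (hg_pos t).le)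
  have hGle1 : ∀ x, G x ≤ 1 := fun x => by
    rw [hG, ← hg_one]
    exact setIntegral_le_integral hgInt (ae_of_all _ fun t => (hg_pos t).le)
  have hGpos : ∀ x, 0 < G x := fun x => by
    rw [hG]
    refine (setIntegral_pos_iff_support_of_nonneg_ae
      (ae_of_all _ fun t => (hg_pos t).le) hgInt.integrableOn).2 ?_
    have hs : Function.support g ∩ Iic x = Iic x :=
      inter_eq_right.2 (fun t _ => (hg_pos t).ne')
    rw [hs, Real.volume_Iic]
    simp
  set F : ℝ → ℝ := fun c => ∫ x in Iic c, G x with hF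
  -- monotonicity of F
  have hFmono : ∀ {a b : ℝ}, a ≤ b → F a ≤ F b := by
    intro a b hab
    exact setIntegral_mono_set (hGint b) (ae_of_all _ fun x => hGnn x)
      ((Iic_subset_Iic.2 hab).eventuallyLE)
  -- Lipschitz-type bound
  have hFlip : ∀ a b : ℝ, a ≤ b → F b - F a ≤ b - a := by
    intro a b hab
    have hsplit : F b = F a + ∫ x in Ioc a b, G x := by
      rw [hF]
      simp only
      rw [← setIntegral_union (Iic_disjoint_Ioc le_rfl) measurableSet_Ioc
        (hGint a) ((hGint b).mono_set Ioc_subset_Iic_self), Iic_union_Ioc_eq_Iic hab]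
    have hbound : (∫ x in Ioc a b, G x) ≤ b - a := by
      have h1 : (∫ x in Ioc a b, G x) ≤ ∫ x in Ioc a b, (1 : ℝ) := by
        apply setIntegral_mono_on ((hGint b).mono_set Ioc_subset_Iic_self)
          (integrableOn_const measure_Ioc_lt_top.ne)
          measurableSet_Ioc (fun x _ => hGle1 x)
      have h2 : (∫ x in Ioc a b, (1 : ℝ)) = b - a := by
        simp [Real.volume_Ioc, ENNReal.toReal_ofReal (sub_nonneg.2 hab), hab]
      linarith
    linarith
  have hVeq : ∀ r, V r = p / (1 - p) * F (r₀ * μ₀ / r) + (r₀ * μ₀ / r - μ₀) := by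
    intro r; rw [hV r]; ring
  have hrμ : 0 < r₀ * μ₀ := mul_pos hr₀ hμ₀pos
  -- strict antitonicity
  have hanti : StrictAntiOn V (Set.Ioi (0 : ℝ)) := by
    intro r1 h1 r2 h2 h12
    have hc : r₀ * μ₀ / r2 < r₀ * μ₀ / r1 :=
      div_lt_div_of_pos_left hrμ (mem_Ioi.1 h1) h12
    have hFle : F (r₀ * μ₀ / r2) ≤ F (r₀ * μ₀ / r1) := hFmono hc.le
    rw [hVeq r1, hVeq r2]
    have := mul_le_mul_of_nonneg_left hFle hq.le
    linarith
  have hVr₀pos : 0 < V r₀ := by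
    have hcr : r₀ * μ₀ / r₀ = μ₀ := by field_simp
    rw [hVeq r₀, hcr]
    have hFpos : 0 < F μ₀ := by
      rw [hF]
      refine (setIntegral_pos_iff_support_of_nonneg_ae
        (ae_of_all _ fun x => hGnn x) (hGint μ₀)).2 ?_
      have hsupp : (Function.support G) ∩ Iic μ₀ = Iic μ₀ :=
        inter_eq_right.2 (fun t _ => (hGpos t).ne')
      rw [hsupp, Real.volume_Iic]
      simp
    nlinarith
  have htend : Tendsto V atTop (nhds (p / (1 - p) * (∫ x in Set.Iic (0:ℝ), G x) - μ₀)) := by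
    have hc0 : Tendsto (fun r : ℝ => r₀ * μ₀ / r) atTop (nhds 0) :=
      tendsto_const_nhds.div_atTop tendsto_id
    have hL : (p / (1 - p) * (∫ x in Set.Iic (0:ℝ), G x) - μ₀)
        = p / (1 - p) * F 0 + (0 - μ₀) := by rw [hF]; ring
    rw [hL]
    have hupper : ∀ᶠ r in atTop, V r ≤ (p / (1 - p) * F 0 + (0 - μ₀))
        + (p / (1 - p) + 1) * (r₀ * μ₀ / r) := by
      filter_upwards [eventually_gt_atTop (0:ℝ)] with r hr
      have hcnn : 0 ≤ r₀ * μ₀ / r := le_of_lt (div_pos hrμ hr)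
      have h1 : F (r₀ * μ₀ / r) - F 0 ≤ r₀ * μ₀ / r - 0 := hFlip 0 _ hcnn
      rw [hVeq r]
      nlinarith
    have hlower : ∀ᶠ r in atTop, (p / (1 - p) * F 0 + (0 - μ₀)) ≤ V r := by
      filter_upwards [eventually_gt_atTop (0:ℝ)] with r hr
      have hcnn : 0 ≤ r₀ * μ₀ / r := le_of_lt (div_pos hrμ hr)
      have h1 : F 0 ≤ F (r₀ * μ₀ / r) := hFmono hcnn
      rw [hVeq r]
      nlinarith
    have hub : Tendsto (fun r : ℝ => (p / (1 - p) * F 0 + (0 - μ₀))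
        + (p / (1 - p) + 1) * (r₀ * μ₀ / r)) atTop
        (nhds (p / (1 - p) * F 0 + (0 - μ₀))) := by
      have := (hc0.const_mul (p / (1 - p) + 1)).const_add (p / (1 - p) * F 0 + (0 - μ₀))
      simpa using this
    exact tendsto_of_tendsto_of_tendsto_of_le_of_le' tendsto_const_nhds hub hlower hupper
  refine ⟨hanti, hVr₀pos, htend, ?_⟩
  intro hL
  have hLneg : p / (1 - p) * (∫ x in Set.Iic (0:ℝ), G x) - μ₀ < 0 := by linarith
  -- continuity of F
  have hFcont : Continuous F := by
    have hlip : LipschitzWith 1 F := by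
      apply LipschitzWith.of_dist_le_mul
      intro a b
      rw [Real.dist_eq, Real.dist_eq, NNReal.coe_one, one_mul]
      rcases le_total a b with hab | hab
      · have h1 := hFlip a b hab; have h2 := hFmono hab
        rw [abs_of_nonpos (by linarith), abs_of_nonpos (by linarith)]
        linarith
      · have h1 := hFlip b a hab; have h2 := hFmono hab
        rw [abs_of_nonneg (by linarith), abs_of_nonneg (by linarith)]
        linarith
    exact hlip.continuous
  have hVcont : ContinuousOn V (Ioi 0) := by
    have hc : ContinuousOn (fun r : ℝ => r₀ * μ₀ / r) (Ioi 0) :=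
      continuousOn_const.div continuousOn_id (fun r hr => (mem_Ioi.1 hr).ne')
    have : ContinuousOn
        (fun r => p / (1 - p) * F (r₀ * μ₀ / r) + (r₀ * μ₀ / r - μ₀)) (Ioi 0) :=
      (continuousOn_const.mul (hFcont.comp_continuousOn hc)).add
        (hc.sub continuousOn_const)
    exact this.congr fun r _ => hVeq r
  obtain ⟨R, hRneg, hRgt⟩ := ((htend.eventually_lt_const hLneg).and
    (eventually_gt_atTop r₀)).exists
  have hIcc : Icc r₀ R ⊆ Ioi 0 := fun x hx => lt_of_lt_of_le hr₀ hx.1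
  obtain ⟨rbar, hmem, heq⟩ :=
    intermediate_value_Ioo' hRgt.le (hVcont.mono hIcc) (⟨hRneg, hVr₀pos⟩ : (0:ℝ) ∈ Ioo (V R) (V r₀))
  have hrbar0 : rbar ∈ Ioi (0:ℝ) := mem_Ioi.2 (hr₀.trans hmem.1)
  refine ⟨rbar, ⟨hmem.1, heq⟩, ?_, ?_, ?_⟩
  · intro r hr hVr
    exact hanti.injOn (mem_Ioi.2 (hr₀.trans hr)) hrbar0 (by rw [hVr, heq])
  · intro r hr hrlt
    have := hanti (mem_Ioi.2 hr) hrbar0 hrlt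
    linarith [heq ▸ this]
  · intro r hr
    have := hanti hrbar0 (mem_Ioi.2 ((mem_Ioi.1 hrbar0).trans hr)) hr
    linarith [heq ▸ this]
end

section
/- Let g : ℝ → ℝ be a continuous, everywhere positive probability density with CDF G(x) = ∫_{−∞}^{x} g(t) dt, ∫_ℝ g = 1, mean μ₀ = ∫_ℝ x·g(x) dx, and μ₀ > 0. Let p ∈ (0,1) and s ∈ ℝ with (p/(1−p))·∫_{−∞}^{s} G(x) dx + s − μ₀ > 0. For β ∈ (0,1) define x̄_{p,β}(u) = (2s − (1−p)·u)/(1+p), let x̲_p(β) be the unique zero in (−∞, s) of H_β(u) = (β/(1−β))·∫_{u}^{x̄_{p,β}(u)} (G(x) − G(x̄_{p,β}(u))) dx + (p/(1−p))·∫_{−∞}^{u} G(x) dx − (μ₀ − u), and let x̄_p(β) = x̄_{p,β}(x̲_p(β)). Then for all β₁ < β₂ in (0,1): x̲_p(β₁) < x̲_p(β₂) and x̄_p(β₁) > x̄_p(β₂). -/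
open MeasureTheory Set

/-- Part 2 of Corollary 2 (extension, case `r < r̄`): the equilibrium thresholds satisfy
`∂x̲_p/∂β > 0` and `∂x̄_p/∂β < 0`, i.e. the elaborateness of reports increases with the
investor's competence `β`. -/
theorem stmt_17 (g : ℝ → ℝ) (hg_cont : Continuous g) (hg_pos : ∀ x, 0 < g x)
    (hg_one : (∫ x, g x) = 1)
    (hxg_int : Integrable (fun x => x * g x))
    (μ₀ : ℝ) (hμ₀ : μ₀ = ∫ x, x * g x) (hμ₀pos : 0 < μ₀)
    (G : ℝ → ℝ) (hG : ∀ x, G x = ∫ t in Iic x, g t)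
    (hGint : ∀ a : ℝ, IntegrableOn G (Set.Iic a))
    (p : ℝ) (hp : p ∈ Set.Ioo (0 : ℝ) 1)
    (s : ℝ)
    (hVpos : p / (1 - p) * (∫ x in Set.Iic s, G x) + s - μ₀ > 0)
    (xbarp : ℝ → ℝ) (hxbarp : ∀ u, xbarp u = (2 * s - (1 - p) * u) / (1 + p))
    (H : ℝ → ℝ → ℝ)
    (hH : ∀ β u, H β u = β / (1 - β) * (∫ x in u..(xbarp u), (G x - G (xbarp u)))
      + p / (1 - p) * (∫ x in Set.Iic u, G x) - (μ₀ - u))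
    (β₁ β₂ : ℝ) (hβ₁ : β₁ ∈ Set.Ioo (0 : ℝ) 1) (hβ₂ : β₂ ∈ Set.Ioo (0 : ℝ) 1)
    (hββ : β₁ < β₂)
    (xl₁ xl₂ : ℝ) (hxl₁ : xl₁ ∈ Set.Iio s) (hxl₂ : xl₂ ∈ Set.Iio s)
    (hz₁ : H β₁ xl₁ = 0) (hz₂ : H β₂ xl₂ = 0) :
    xl₁ < xl₂ ∧ xbarp xl₂ < xbarp xl₁ := by
  obtain ⟨hp0, hp1⟩ := hp
  obtain ⟨hb10, hb11⟩ := hβ₁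
  obtain ⟨hb20, hb21⟩ := hβ₂
  -- g is integrable
  have hgInt : Integrable g := by
    by_contra h
    rw [integral_undef h] at hg_one
    norm_num at hg_one
  -- G is nonnegative
  have hGnn : ∀ x, 0 ≤ G x := fun x => by
    rw [hG]; exact setIntegral_nonneg measurableSet_Iic fun t _ => (hg_pos t).le
  -- G is strictly monotone
  have hGlt : ∀ x y : ℝ, x < y → G x < G y := by
    intro x y hxy
    have hdiff : G y - G x = ∫ t in x..y, g t := by
      rw [hG, hG]
      exact (intervalIntegral.integral_Iic_sub_Iic hgInt.integrableOn hgInt.integrableOn)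
    have hpos : 0 < ∫ t in x..y, g t :=
      intervalIntegral.intervalIntegral_pos_of_pos_on hgInt.intervalIntegrable
        (fun t _ => hg_pos t) hxy
    linarith
  have hGle : ∀ x y : ℝ, x ≤ y → G x ≤ G y := by
    intro x y hxy
    rcases eq_or_lt_of_le hxy with h | h
    · rw [h]
    · exact (hGlt x y h).le
  -- interval integrability of G and of const - G
  have hGII : ∀ a b : ℝ, IntervalIntegrable G volume a b := by
    intro a b
    rw [intervalIntegrable_iff]
    exact (hGint (max a b)).mono_set (Set.uIoc_subset_uIcc.trans
      (by rw [Set.uIcc_eq_union]; intro x hx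
          rcases hx with hx | hx
          · exact hx.2.trans (le_max_right a b)
          · exact hx.2.trans (le_max_left a b)))
  have hfII : ∀ (c a b : ℝ), IntervalIntegrable (fun x => G c - G x) volume a b :=
    fun c a b => (intervalIntegrable_const).sub (hGII a b)
  -- xbarp facts
  have hxb_anti : ∀ u v : ℝ, u < v → xbarp v < xbarp u := by
    intro u v huv
    rw [hxbarp, hxbarp]
    rw [div_lt_div_iff₀ (by linarith) (by linarith)]
    nlinarith [mul_pos (mul_pos (show (0:ℝ) < 1 - p by linarith)
      (show (0:ℝ) < v - u by linarith)) (show (0:ℝ) < 1 + p by linarith)]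
  have hub : ∀ u : ℝ, u < s → u < xbarp u := by
    intro u hus
    rw [hxbarp, lt_div_iff₀ (by linarith : (0:ℝ) < 1 + p)]
    nlinarith
  -- the "J" functional: J u = ∫ x in u..xbarp u, (G (xbarp u) - G x)
  -- strict monotone decrease of J for u < v < s
  have hJmono : ∀ u v : ℝ, u < v → v < s →
      (∫ x in v..xbarp v, (G (xbarp v) - G x)) < ∫ x in u..xbarp u, (G (xbarp u) - G x) := by
    intro u v huv hvs
    set a := xbarp u with ha
    set b := xbarp v with hb
    have hba : b < a := hxb_anti u v huv
    have hvb : v < b := hub v hvs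
    have hub' : u < a := lt_trans (lt_trans huv hvb) hba
    -- split ∫ u..a = ∫ u..v + ∫ v..b + ∫ b..a  of f x = G a - G x
    have hsplit2 : (∫ x in v..b, (G a - G x)) + ∫ x in b..a, (G a - G x)
        = ∫ x in v..a, (G a - G x) :=
      intervalIntegral.integral_add_adjacent_intervals (hfII a v b) (hfII a b a)
    have hsplit1 : (∫ x in u..v, (G a - G x)) + ∫ x in v..a, (G a - G x)
        = ∫ x in u..a, (G a - G x) :=
      intervalIntegral.integral_add_adjacent_intervals (hfII a u v) (hfII a v a)
    have hnn1 : 0 ≤ ∫ x in u..v, (G a - G x) :=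
      intervalIntegral.integral_nonneg huv.le
        (fun x hx => sub_nonneg.2 (hGle _ _ (le_trans hx.2 (by linarith))))
    have hnn2 : 0 ≤ ∫ x in b..a, (G a - G x) :=
      intervalIntegral.integral_nonneg hba.le
        (fun x hx => sub_nonneg.2 (hGle _ _ hx.2))
    -- middle piece comparison
    have hmid : (∫ x in v..b, (G a - G x)) - ∫ x in v..b, (G b - G x)
        = (b - v) * (G a - G b) := by
      rw [← intervalIntegral.integral_sub (hfII a v b) (hfII b v b)]
      have : (fun x => (G a - G x) - (G b - G x)) = fun _ => G a - G b := by
        funext x; ring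
      rw [show (fun x => G a - G x - (G b - G x)) = fun _ : ℝ => G a - G b from this,
        intervalIntegral.integral_const, smul_eq_mul]
    have hGba : G b < G a := hGlt b a hba
    have hmidpos : 0 < (b - v) * (G a - G b) := by
      apply mul_pos <;> linarith
    linarith
  -- J is positive for u < s
  have hJpos : ∀ u : ℝ, u < s → 0 < ∫ x in u..xbarp u, (G (xbarp u) - G x) := by
    intro u hus
    exact intervalIntegral.intervalIntegral_pos_of_pos_on (hfII _ _ _)
      (fun x hx => sub_pos.2 (hGlt _ _ hx.2)) (hub u hus)
  -- I = -J
  have hIJ : ∀ u : ℝ, (∫ x in u..xbarp u, (G x - G (xbarp u)))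
      = -(∫ x in u..xbarp u, (G (xbarp u) - G x)) := by
    intro u
    rw [← intervalIntegral.integral_neg]
    congr 1; funext x; ring
  -- monotonicity of H β on Iio s
  have hHmono : ∀ β u v : ℝ, 0 < β → β < 1 → u ≤ v → v < s → H β u ≤ H β v := by
    intro β u v hβ0 hβ1 huv hvs
    rcases eq_or_lt_of_le huv with h | h
    · rw [h]
    · have hIuv : (∫ x in u..xbarp u, (G x - G (xbarp u)))
          ≤ ∫ x in v..xbarp v, (G x - G (xbarp v)) := by
        rw [hIJ, hIJ]
        have := hJmono u v h hvs
        linarith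
      have hK : (∫ x in Set.Iic u, G x) ≤ ∫ x in Set.Iic v, G x := by
        have hdiff : (∫ x in Set.Iic v, G x) - ∫ x in Set.Iic u, G x = ∫ x in u..v, G x :=
          intervalIntegral.integral_Iic_sub_Iic (hGint u) (hGint v)
        have hnn : 0 ≤ ∫ x in u..v, G x :=
          intervalIntegral.integral_nonneg h.le (fun x _ => hGnn x)
        linarith
      have hbβ : 0 < β / (1 - β) := div_pos hβ0 (by linarith)
      have hcp : 0 < p / (1 - p) := div_pos hp0 (by linarith)
      rw [hH, hH]
      have h1 := mul_le_mul_of_nonneg_left hIuv hbβ.le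
      have h2 := mul_le_mul_of_nonneg_left hK hcp.le
      linarith
  -- ratio monotonicity in β
  have hbb : β₁ / (1 - β₁) < β₂ / (1 - β₂) := by
    rw [div_lt_div_iff₀ (by linarith) (by linarith)]
    nlinarith
  -- H β₂ xl₁ < 0
  have hIneg : (∫ x in xl₁..xbarp xl₁, (G x - G (xbarp xl₁))) < 0 := by
    rw [hIJ]
    have := hJpos xl₁ hxl₁
    linarith
  have hD : H β₂ xl₁ < 0 := by
    have hdiff : H β₂ xl₁ - H β₁ xl₁
        = (β₂ / (1 - β₂) - β₁ / (1 - β₁)) * ∫ x in xl₁..xbarp xl₁, (G x - G (xbarp xl₁)) := by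
      rw [hH, hH]; ring
    have : (β₂ / (1 - β₂) - β₁ / (1 - β₁)) * (∫ x in xl₁..xbarp xl₁, (G x - G (xbarp xl₁))) < 0 :=
      mul_neg_of_pos_of_neg (by linarith) hIneg
    linarith
  -- conclude
  have hlt : xl₁ < xl₂ := by
    by_contra h
    push_neg at h
    have := hHmono β₂ xl₂ xl₁ hb20 hb21 h hxl₁
    rw [hz₂] at this
    linarith
  exact ⟨hlt, hxb_anti _ _ hlt⟩
end

section
/- Let g : ℝ → ℝ be a continuous, everywhere positive probability density with CDF G(x) = ∫_{−∞}^{x} g(t) dt, ∫_ℝ g = 1, mean μ₀ = ∫_ℝ x·g(x) dx, and μ₀ > 0. Let p ∈ (0,1) and s ∈ ℝ with (p/(1−p))·∫_{−∞}^{s} G(x) dx + s − μ₀ < 0. For β ∈ (0,1) let x̄_p(β) be the unique zero in (s, +∞) of T_β(v) = (β/((1−β)(1−p)))·∫_{2s−v}^{v} (G(x) − G(2s−v)) dx + (p/(1−p))·∫_{−∞}^{v} G(x) dx − (μ₀ − v), and let x̲_p(β) = 2s − x̄_p(β). Then for all β₁ < β₂ in (0,1): x̄_p(β₁) > x̄_p(β₂)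 and x̲_p(β₁) < x̲_p(β₂). -/
open MeasureTheory Set

/-- Part 2 of Corollary 2 (extension, case `r > r̄`): the equilibrium thresholds satisfy
`∂x̄_p/∂β < 0` and `∂x̲_p/∂β > 0`, where `x̲_p = 2s − x̄_p`. -/
theorem stmt_18 (g : ℝ → ℝ) (hg_cont : Continuous g) (hg_pos : ∀ x, 0 < g x)
    (hg_one : (∫ x, g x) = 1)
    (hxg_int : Integrable (fun x => x * g x))
    (μ₀ : ℝ) (hμ₀ : μ₀ = ∫ x, x * g x) (hμ₀pos : 0 < μ₀)
    (G : ℝ → ℝ) (hG : ∀ x, G x = ∫ t in Iic x, g t)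
    (hGint : ∀ a : ℝ, IntegrableOn G (Set.Iic a))
    (p : ℝ) (hp : p ∈ Set.Ioo (0 : ℝ) 1)
    (s : ℝ)
    (hVneg : p / (1 - p) * (∫ x in Set.Iic s, G x) + s - μ₀ < 0)
    (T : ℝ → ℝ → ℝ)
    (hT : ∀ β v, T β v
      = β / ((1 - β) * (1 - p)) * (∫ x in (2 * s - v)..v, (G x - G (2 * s - v)))
        + p / (1 - p) * (∫ x in Set.Iic v, G x) - (μ₀ - v))
    (β₁ β₂ : ℝ) (hβ₁ : β₁ ∈ Set.Ioo (0 : ℝ) 1) (hβ₂ : β₂ ∈ Set.Ioo (0 : ℝ) 1)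
    (hββ : β₁ < β₂)
    (xu₁ xu₂ : ℝ) (hxu₁ : xu₁ ∈ Set.Ioi s) (hxu₂ : xu₂ ∈ Set.Ioi s)
    (hz₁ : T β₁ xu₁ = 0) (hz₂ : T β₂ xu₂ = 0) :
    xu₂ < xu₁ ∧ 2 * s - xu₁ < 2 * s - xu₂ := by
  obtain ⟨hp0, hp1⟩ := hp
  obtain ⟨hb10, hb11⟩ := hβ₁
  obtain ⟨hb20, hb21⟩ := hβ₂
  have hs₁ : s < xu₁ := hxu₁
  have hs₂ : s < xu₂ := hxu₂
  -- g is integrable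
  have hgint : Integrable g := by
    by_contra h
    rw [integral_undef h] at hg_one; norm_num at hg_one
  -- G is monotone
  have hGmono : Monotone G := by
    intro a b hab
    rw [hG a, hG b]
    exact setIntegral_mono_set hgint.integrableOn
      (Filter.Eventually.of_forall fun x => (hg_pos x).le)
      (HasSubset.Subset.eventuallyLE (Iic_subset_Iic.2 hab))
  have hGnonneg : ∀ x, 0 ≤ G x := fun x => by
    rw [hG x]
    exact setIntegral_nonneg measurableSet_Iic fun t _ => (hg_pos t).le
  -- G is strictly increasing
  have hGstrict : ∀ a b : ℝ, a < b → G a < G b := by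
    intro a b hab
    have h1 : G b - G a = ∫ x in a..b, g x := by
      rw [hG a, hG b]
      exact intervalIntegral.integral_Iic_sub_Iic hgint.integrableOn hgint.integrableOn
    have h2 : 0 < ∫ x in a..b, g x :=
      intervalIntegral.intervalIntegral_pos_of_pos_on
        (hg_cont.intervalIntegrable a b) (fun x _ => hg_pos x) hab
    linarith
  -- interval integrability of G
  have hGii : ∀ a b : ℝ, IntervalIntegrable G volume a b := by
    intro a b
    apply IntegrableOn.intervalIntegrable
    exact (hGint (max a b)).mono_set (fun x hx => hx.2)
  -- positivity of the middle integral at xu₂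
  set a₁ : ℝ := 2 * s - xu₁ with ha₁
  set a₂ : ℝ := 2 * s - xu₂ with ha₂
  have ha₂lt : a₂ < xu₂ := by simp only [ha₂]; linarith
  have hI₂pos : 0 < ∫ x in a₂..xu₂, (G x - G a₂) := by
    apply intervalIntegral.intervalIntegral_pos_of_pos_on
    · exact (hGii a₂ xu₂).sub (intervalIntegrable_const)
    · intro x hx
      have := hGstrict a₂ x hx.1
      linarith
    · exact ha₂lt
  -- coefficient strictly increasing in β
  set c : ℝ → ℝ := fun β => β / ((1 - β) * (1 - p)) with hc
  have hd1 : (0:ℝ) < (1 - β₁) * (1 - p) := by nlinarith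
  have hd2 : (0:ℝ) < (1 - β₂) * (1 - p) := by nlinarith
  have hc1pos : 0 < c β₁ := div_pos hb10 hd1
  have hcmono : c β₁ < c β₂ := by
    rw [hc]
    rw [div_lt_div_iff₀ hd1 hd2]
    nlinarith
  have hqpos : 0 < p / (1 - p) := div_pos hp0 (by linarith)
  -- main claim: xu₂ < xu₁
  have hmain : xu₂ < xu₁ := by
    by_contra hcon
    push_neg at hcon  -- xu₁ ≤ xu₂
    have ha12 : a₂ ≤ a₁ := by simp only [ha₁, ha₂]; linarith
    have ha₁lt : a₁ < xu₁ := by simp only [ha₁]; linarith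
    -- J monotone
    have hJ : (∫ x in Set.Iic xu₁, G x) ≤ ∫ x in Set.Iic xu₂, G x :=
      setIntegral_mono_set (hGint xu₂)
        (Filter.Eventually.of_forall fun x => hGnonneg x)
        (HasSubset.Subset.eventuallyLE (Iic_subset_Iic.2 hcon))
    -- I monotone : I₁ ≤ I₂
    have hsplit : (∫ x in a₂..xu₂, G x)
        = (∫ x in a₂..a₁, G x) + (∫ x in a₁..xu₁, G x) + (∫ x in xu₁..xu₂, G x) := by
      rw [intervalIntegral.integral_add_adjacent_intervals (hGii a₂ a₁) (hGii a₁ xu₁),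
        intervalIntegral.integral_add_adjacent_intervals (hGii a₂ xu₁) (hGii xu₁ xu₂)]
    have hIeq : ∀ a b : ℝ, (∫ x in a..b, (G x - G a)) = (∫ x in a..b, G x) - (b - a) * G a := by
      intro a b
      rw [intervalIntegral.integral_sub (hGii a b) intervalIntegrable_const,
        intervalIntegral.integral_const, smul_eq_mul]
    have hb1 : (a₁ - a₂) * G a₂ ≤ ∫ x in a₂..a₁, G x := by
      have := intervalIntegral.integral_mono_on ha12
        (intervalIntegrable_const (c := G a₂)) (hGii a₂ a₁)
        (fun x hx => hGmono hx.1)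
      rwa [intervalIntegral.integral_const, smul_eq_mul] at this
    have hb2 : (xu₂ - xu₁) * G a₂ ≤ ∫ x in xu₁..xu₂, G x := by
      have := intervalIntegral.integral_mono_on hcon
        (intervalIntegrable_const (c := G a₂)) (hGii xu₁ xu₂)
        (fun x hx => hGmono (by linarith [hx.1] : a₂ ≤ x))
      rwa [intervalIntegral.integral_const, smul_eq_mul] at this
    have hb3 : G a₂ ≤ G a₁ := hGmono ha12
    have hI : (∫ x in a₁..xu₁, (G x - G a₁)) ≤ ∫ x in a₂..xu₂, (G x - G a₂) := by
      rw [hIeq, hIeq, hsplit]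
      have h4 : (xu₁ - a₁) * G a₂ ≤ (xu₁ - a₁) * G a₁ :=
        mul_le_mul_of_nonneg_left hb3 (by linarith)
      simp only [ha₁, ha₂] at *
      nlinarith
    -- combine: T β₁ xu₁ ≤ T β₁ xu₂
    have hcI : c β₁ * (∫ x in a₁..xu₁, (G x - G a₁)) ≤ c β₁ * ∫ x in a₂..xu₂, (G x - G a₂) :=
      mul_le_mul_of_nonneg_left hI hc1pos.le
    have hqJ : p / (1 - p) * (∫ x in Set.Iic xu₁, G x) ≤ p / (1 - p) * ∫ x in Set.Iic xu₂, G x :=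
      mul_le_mul_of_nonneg_left hJ hqpos.le
    have hT1 := hT β₁ xu₁
    have hT2 := hT β₁ xu₂
    have hT3 := hT β₂ xu₂
    rw [← ha₁] at hT1
    rw [← ha₂] at hT2 hT3
    -- T β₁ xu₂ < T β₂ xu₂ = 0
    have hβstep : c β₁ * (∫ x in a₂..xu₂, (G x - G a₂)) < c β₂ * ∫ x in a₂..xu₂, (G x - G a₂) :=
      mul_lt_mul_of_pos_right hcmono hI₂pos
    simp only [hc] at hcI hβstep
    linarith [hz₁, hz₂, hT1, hT2, hT3]
  exact ⟨hmain, by linarith⟩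
end
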